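/- arXiv:2510.11433 — 4 statements merged into one kernel-verified Lean document; each statement's English description precedes it below -/
import Mathlib

section
/- Suppose (𝒳, S, γ, (Λ_a)_{a∈A}) is a spectral decomposition system for a Euclidean space 𝔥 with {Λ_a : a ∈ A} closed in L(𝒳,𝔥). Let φ : 𝒳 → [−∞,+∞] be S-invariant, let x, y ∈ 𝒳, and let a ∈ A. If y ∈ ∂_L φ(x), then Λ_a y ∈ ∂_L(φ∘γ)(Λ_a x). -/
open Filter Topology Set Metric
open scoped RealInnerProductSpace

noncomputable section

/-- A spectral decomposition system `(𝒳, S, γ, (Λ_a)_{a ∈ A})` for the space `H`: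
`S` acts on `𝒳` by linear isometries (via `act`), `γ : H → 𝒳` is the spectral
mapping, each `Λ a : 𝒳 → H` is a linear isometry, and the axioms [A], [B], [C] hold,
with `τ` the `S`-invariant ordering mapping of axiom [A]. -/
structure SDS (𝒳 H : Type*) [NormedAddCommGroup 𝒳] [InnerProductSpace ℝ 𝒳]
    [NormedAddCommGroup H] [InnerProductSpace ℝ H]
    (S : Type*) [Group S] (A : Type*) where
  act : S →* (𝒳 ≃ₗᵢ[ℝ] 𝒳)
  γ : H → 𝒳
  Λ : A → 𝒳 →ₗᵢ[ℝ] H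
  τ : 𝒳 → 𝒳
  τ_inv : ∀ (s : S) (x : 𝒳), τ (act s x) = τ x
  τ_orbit : ∀ x : 𝒳, ∃ s : S, τ x = act s x
  γΛ : ∀ (a : A) (x : 𝒳), γ (Λ a x) = τ x
  decomp : ∀ X : H, ∃ a : A, X = Λ a (γ X)
  inner_le : ∀ X Y : H, ⟪X, Y⟫ ≤ ⟪γ X, γ Y⟫

variable {𝒳 H S A : Type*} [NormedAddCommGroup 𝒳] [InnerProductSpace ℝ 𝒳]
    [NormedAddCommGroup H] [InnerProductSpace ℝ H] [Group S]

/-- The set `{Λ_a : a ∈ A}`, regarded as a subset of the space `L(𝒳, H)` of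
continuous linear maps with the operator norm. -/
def SDS.LambdaSet (𝔖 : SDS 𝒳 H S A) : Set (𝒳 →L[ℝ] H) :=
  {L | ∃ a : A, L = (𝔖.Λ a).toContinuousLinearMap}

/-- `A_X = {a ∈ A : X = Λ_a (γ X)}`. -/
def SDS.AX (𝔖 : SDS 𝒳 H S A) (X : H) : Set A := {a | X = 𝔖.Λ a (𝔖.γ X)}

/-- The Fréchet subdifferential of an extended-real-valued `f` at `x`: empty unless
`f x` is finite, in which case it is the set of `y` with
`liminf_{z → x, z ≠ x} (f(z) - f(x) - ⟨z - x, y⟩)/‖z - x‖ ≥ 0`, in ε-δ form. -/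
def fSubdiff {E : Type*} [NormedAddCommGroup E] [InnerProductSpace ℝ E]
    (f : E → EReal) (x : E) : Set E :=
  {y | (∃ r : ℝ, f x = (r : EReal)) ∧ ∀ ε : ℝ, 0 < ε → ∃ δ : ℝ, 0 < δ ∧
    ∀ z : E, ‖z - x‖ < δ → f x + ((⟪z - x, y⟫ - ε * ‖z - x‖ : ℝ) : EReal) ≤ f z}

/-- The limiting subdifferential of `f` at `x`: empty unless `f x` is finite, in which
case it is the set of limits `y` of sequences `y_n ∈ ∂_F f(x_n)` with `x_n → x` and
`f(x_n) → f(x)`. -/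
def lSubdiff {E : Type*} [NormedAddCommGroup E] [InnerProductSpace ℝ E]
    (f : E → EReal) (x : E) : Set E :=
  {y | (∃ r : ℝ, f x = (r : EReal)) ∧ ∃ xn yn : ℕ → E,
    (∀ n, yn n ∈ fSubdiff f (xn n)) ∧ Tendsto xn atTop (𝓝 x) ∧
    Tendsto (fun n => f (xn n)) atTop (𝓝 (f x)) ∧ Tendsto yn atTop (𝓝 y)}


private lemma aux_phi_gamma_lambda (𝔖 : SDS 𝒳 H S A) (φ : 𝒳 → EReal)
    (hφ : ∀ (s : S) (x : 𝒳), φ (𝔖.act s x) = φ x) (a : A) (w : 𝒳) :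
    φ (𝔖.γ (𝔖.Λ a w)) = φ w := by
  obtain ⟨s, hs⟩ := 𝔖.τ_orbit w
  rw [𝔖.γΛ, hs, hφ]

private lemma aux_norm_gamma (𝔖 : SDS 𝒳 H S A) (Z : H) : ‖𝔖.γ Z‖ = ‖Z‖ := by
  obtain ⟨b, hb⟩ := 𝔖.decomp Z
  conv_rhs => rw [hb, (𝔖.Λ b).norm_map]

private lemma frechet_lambda (𝔖 : SDS 𝒳 H S A)
    (φ : 𝒳 → EReal) (hφ : ∀ (s : S) (x : 𝒳), φ (𝔖.act s x) = φ x)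
    (x y : 𝒳) (a : A) (hy : y ∈ fSubdiff φ x) :
    𝔖.Λ a y ∈ fSubdiff (fun Z => φ (𝔖.γ Z)) (𝔖.Λ a x) := by
  obtain ⟨⟨r, hr⟩, hF⟩ := hy
  have hfix : φ (𝔖.γ (𝔖.Λ a x)) = φ x := aux_phi_gamma_lambda 𝔖 φ hφ a x
  refine ⟨⟨r, by simpa [hfix] using hr⟩, ?_⟩
  intro ε hε
  obtain ⟨δ, hδ, hδ'⟩ := hF ε hε
  have hden : (0:ℝ) < ε + 2 * ‖y‖ := by positivity
  refine ⟨δ * (ε / (ε + 2 * ‖y‖)), by positivity, ?_⟩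
  intro Z hZ
  set D := ‖Z - 𝔖.Λ a x‖ with hDdef
  simp only [hfix, hr]
  by_cases hD : D = 0
  · -- Z = Λ a x
    have hZeq : Z = 𝔖.Λ a x := by
      have := norm_eq_zero.mp hD
      exact sub_eq_zero.mp this
    have : ⟪Z - 𝔖.Λ a x, 𝔖.Λ a y⟫ - ε * D = 0 := by
      rw [hZeq] at hDdef ⊢
      simp [hDdef]
    rw [this]
    have : φ (𝔖.γ Z) = (r : EReal) := by rw [hZeq, hfix, hr]
    rw [this]
    norm_num
  · have hDpos : 0 < D := lt_of_le_of_ne (norm_nonneg _) (Ne.symm hD)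
    set t := D / ε with htdef
    have htpos : 0 < t := div_pos hDpos hε
    set u := x + t • y with hudef
    obtain ⟨s, hs⟩ := 𝔖.τ_orbit u
    set z := 𝔖.act s⁻¹ (𝔖.γ Z) with hzdef
    have hφz : φ z = φ (𝔖.γ Z) := hφ s⁻¹ _
    have hnz : ‖z‖ = ‖Z‖ := by
      rw [hzdef, (𝔖.act s⁻¹).norm_map, aux_norm_gamma]
    -- the key von Neumann-type inequality
    have hcancel : ∀ v : 𝒳, 𝔖.act s (𝔖.act s⁻¹ v) = v := by
      intro v
      have : 𝔖.act s * 𝔖.act s⁻¹ = 1 := by rw [← map_mul, mul_inv_cancel, map_one]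
      have h2 : (𝔖.act s * 𝔖.act s⁻¹) v = (1 : 𝒳 ≃ₗᵢ[ℝ] 𝒳) v := by rw [this]
      exact h2
    have hkey : ⟪Z, 𝔖.Λ a u⟫ ≤ ⟪z, u⟫ := by
      have h1 : ⟪Z, 𝔖.Λ a u⟫ ≤ ⟪𝔖.γ Z, 𝔖.γ (𝔖.Λ a u)⟫ := 𝔖.inner_le Z (𝔖.Λ a u)
      have h2 : ⟪𝔖.γ Z, 𝔖.γ (𝔖.Λ a u)⟫ = ⟪z, u⟫ := by
        rw [𝔖.γΛ, hs, hzdef]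
        rw [← (𝔖.act s).inner_map_map (𝔖.act s⁻¹ (𝔖.γ Z)) u, hcancel]
      linarith [h1, h2.le, h2.ge]
    set d := ‖z - x‖ with hddef
    -- distance comparison
    have hdist : ‖z - u‖ ≤ ‖Z - 𝔖.Λ a u‖ := by
      have e1 : ‖z - u‖ ^ 2 = ‖Z‖ ^ 2 - 2 * ⟪z, u⟫ + ‖u‖ ^ 2 := by
        rw [norm_sub_sq_real, hnz]
      have e2 : ‖Z - 𝔖.Λ a u‖ ^ 2 = ‖Z‖ ^ 2 - 2 * ⟪Z, 𝔖.Λ a u⟫ + ‖u‖ ^ 2 := by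
        rw [norm_sub_sq_real, (𝔖.Λ a).norm_map]
      nlinarith [norm_nonneg (z - u), norm_nonneg (Z - 𝔖.Λ a u), hkey]
    have hux : ‖u - x‖ = t * ‖y‖ := by
      rw [hudef]
      simp [norm_smul, abs_of_pos htpos]
    have hd_le : d ≤ D + 2 * (t * ‖y‖) := by
      have h1 : d ≤ ‖z - u‖ + ‖u - x‖ := by
        have := norm_sub_le_norm_sub_add_norm_sub z u x
        simpa [hddef] using this
      have h2 : ‖Z - 𝔖.Λ a u‖ ≤ D + t * ‖y‖ := by
        have h3 : ‖Z - 𝔖.Λ a u‖ ≤ ‖Z - 𝔖.Λ a x‖ + ‖𝔖.Λ a x - 𝔖.Λ a u‖ :=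
          norm_sub_le_norm_sub_add_norm_sub _ _ _
        have h4 : ‖𝔖.Λ a x - 𝔖.Λ a u‖ = t * ‖y‖ := by
          rw [← (𝔖.Λ a).map_sub, (𝔖.Λ a).norm_map, ← norm_neg, neg_sub, hux]
        rw [h4] at h3
        exact h3
      linarith [hdist, hux.le]
    have hd_lt : d < δ := by
      have h2 : d ≤ D * (1 + 2 * ‖y‖ / ε) := by
        rw [htdef] at hd_le
        have : D + 2 * (D / ε * ‖y‖) = D * (1 + 2 * ‖y‖ / ε) := by
          field_simp
        linarith [hd_le, this.le, this.ge]
      have h3 : D * (1 + 2 * ‖y‖ / ε) < δ := by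
        have hfac : 0 < 1 + 2 * ‖y‖ / ε := by positivity
        have heq : δ * (ε / (ε + 2 * ‖y‖)) * (1 + 2 * ‖y‖ / ε) = δ := by
          field_simp
        calc D * (1 + 2 * ‖y‖ / ε) < δ * (ε / (ε + 2 * ‖y‖)) * (1 + 2 * ‖y‖ / ε) := by
              exact mul_lt_mul_of_pos_right hZ hfac
          _ = δ := heq
      linarith
    have hmain := hδ' z hd_lt
    rw [hr, hφz] at hmain
    -- the real-number inequality
    have hreal : ⟪Z - 𝔖.Λ a x, 𝔖.Λ a y⟫ - ε * D ≤ ⟪z - x, y⟫ - ε * d := by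
      have hsplit : ⟪Z, 𝔖.Λ a x⟫ + t * ⟪Z, 𝔖.Λ a y⟫ ≤ ⟪z, x⟫ + t * ⟪z, y⟫ := by
        have e1 : 𝔖.Λ a u = 𝔖.Λ a x + t • 𝔖.Λ a y := by
          rw [hudef, (𝔖.Λ a).map_add, (𝔖.Λ a).map_smul]
        have e2 : ⟪Z, 𝔖.Λ a u⟫ = ⟪Z, 𝔖.Λ a x⟫ + t * ⟪Z, 𝔖.Λ a y⟫ := by
          rw [e1, inner_add_right, real_inner_smul_right]
        have e3 : ⟪z, u⟫ = ⟪z, x⟫ + t * ⟪z, y⟫ := by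
          rw [hudef, inner_add_right, real_inner_smul_right]
        linarith [hkey, e2.le, e2.ge, e3.le, e3.ge]
      have hd2 : d ^ 2 = ‖Z‖ ^ 2 - 2 * ⟪z, x⟫ + ‖x‖ ^ 2 := by
        rw [hddef, norm_sub_sq_real, hnz]
      have hD2 : D ^ 2 = ‖Z‖ ^ 2 - 2 * ⟪Z, 𝔖.Λ a x⟫ + ‖x‖ ^ 2 := by
        rw [hDdef, norm_sub_sq_real, (𝔖.Λ a).norm_map]
      have hinner_xy : ⟪𝔖.Λ a x, 𝔖.Λ a y⟫ = ⟪x, y⟫ := (𝔖.Λ a).inner_map_map x y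
      have hiZ : ⟪Z - 𝔖.Λ a x, 𝔖.Λ a y⟫ = ⟪Z, 𝔖.Λ a y⟫ - ⟪x, y⟫ := by
        rw [inner_sub_left, hinner_xy]
      have hiz : ⟪z - x, y⟫ = ⟪z, y⟫ - ⟪x, y⟫ := by rw [inner_sub_left]
      rw [hiZ, hiz]
      -- from hsplit: t * (⟪z,y⟫ - ⟪Z,Λay⟫) ≥ ⟪Z,Λax⟫ - ⟪z,x⟫ = (d² - D²)/2
      have hts : t * ε = D := div_mul_cancel₀ D (ne_of_gt hε)
      nlinarith [hsplit, hd2, hD2, sq_nonneg (d - D), mul_pos htpos hε,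
        mul_le_mul_of_nonneg_left hsplit (le_of_lt hε)]
    -- conclude over EReal
    calc (r : EReal) + ((⟪Z - 𝔖.Λ a x, 𝔖.Λ a y⟫ - ε * D : ℝ) : EReal)
        = ((r + (⟪Z - 𝔖.Λ a x, 𝔖.Λ a y⟫ - ε * D) : ℝ) : EReal) := by
          rw [EReal.coe_add]
      _ ≤ ((r + (⟪z - x, y⟫ - ε * d) : ℝ) : EReal) := by
          exact_mod_cast add_le_add (le_refl r) hreal
      _ = (r : EReal) + ((⟪z - x, y⟫ - ε * d : ℝ) : EReal) := by rw [EReal.coe_add]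
      _ ≤ φ (𝔖.γ Z) := hmain

/-- For an `S`-invariant `φ : 𝒳 → [-∞, +∞]`, `x, y ∈ 𝒳` and `a ∈ A`:
if `y ∈ ∂_L φ(x)` then `Λ_a y ∈ ∂_L(φ ∘ γ)(Λ_a x)`. -/
theorem limiting_subdiff_lambda
    [FiniteDimensional ℝ 𝒳] [FiniteDimensional ℝ H]
    (𝔖 : SDS 𝒳 H S A) (hcl : IsClosed 𝔖.LambdaSet)
    (φ : 𝒳 → EReal) (hφ : ∀ (s : S) (x : 𝒳), φ (𝔖.act s x) = φ x)
    (x y : 𝒳) (a : A) (hy : y ∈ lSubdiff φ x) :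
    𝔖.Λ a y ∈ lSubdiff (fun Z => φ (𝔖.γ Z)) (𝔖.Λ a x) := by
  obtain ⟨⟨r, hr⟩, xn, yn, hF, hx, hfx, hyn⟩ := hy
  have hfix : φ (𝔖.γ (𝔖.Λ a x)) = φ x := aux_phi_gamma_lambda 𝔖 φ hφ a x
  refine ⟨⟨r, by simpa [hfix] using hr⟩,
    fun n => 𝔖.Λ a (xn n), fun n => 𝔖.Λ a (yn n),
    fun n => frechet_lambda 𝔖 φ hφ (xn n) (yn n) a (hF n), ?_, ?_, ?_⟩
  · exact ((𝔖.Λ a).continuous.tendsto x).comp hx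
  · have : ∀ n, φ (𝔖.γ (𝔖.Λ a (xn n))) = φ (xn n) :=
      fun n => aux_phi_gamma_lambda 𝔖 φ hφ a (xn n)
    simp only [this, hfix]
    exact hfx
  · exact ((𝔖.Λ a).continuous.tendsto y).comp hyn
end
end

section
/- Suppose (𝒳, S, γ, (Λ_a)_{a∈A}) is a spectral decomposition system for a Euclidean space 𝔥 with {Λ_a : a ∈ A} closed in L(𝒳,𝔥). Let φ : 𝒳 → [−∞,+∞] be S-invariant, let x ∈ 𝒳 with φ(x) ∈ ℝ, and let a ∈ A. Then φ∘γ is Fréchet differentiable at Λ_a x if and only if φ is Fréchet differentiable at x, in which case ∇(φ∘γ)(Λ_a x) = Λ_a(∇φ(x)). -/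
open Filter Topology Set Metric
open scoped RealInnerProductSpace

noncomputable section

variable {𝒳 H S A : Type*} [NormedAddCommGroup 𝒳] [InnerProductSpace ℝ 𝒳]
    [NormedAddCommGroup H] [InnerProductSpace ℝ H] [Group S]

/-- `f : E → [-∞, +∞]` has Fréchet gradient `g` at `x`: `f x` is finite and
`lim_{z → x, z ≠ x} |f(z) - f(x) - ⟨z - x, g⟩| / ‖z - x‖ = 0` (in particular `f`
is finite near `x`), in ε-δ form. -/
def EHasGradientAt {E : Type*} [NormedAddCommGroup E] [InnerProductSpace ℝ E]
    (f : E → EReal) (g x : E) : Prop :=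
  (∃ r : ℝ, f x = (r : EReal)) ∧ ∀ ε : ℝ, 0 < ε → ∃ δ : ℝ, 0 < δ ∧
    ∀ z : E, ‖z - x‖ < δ → ∃ rz rx : ℝ, f z = (rz : EReal) ∧ f x = (rx : EReal) ∧
      |rz - rx - ⟪z - x, g⟫| ≤ ε * ‖z - x‖

/-- `f` is Fréchet differentiable at `x`: there is a unique gradient `∇f(x)`. -/
def EFDiffAt {E : Type*} [NormedAddCommGroup E] [InnerProductSpace ℝ E]
    (f : E → EReal) (x : E) : Prop :=
  ∃! g : E, EHasGradientAt f g x

lemma SDS.norm_gamma (𝔖 : SDS 𝒳 H S A) (X : H) : ‖𝔖.γ X‖ = ‖X‖ := by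
  obtain ⟨b, hb⟩ := 𝔖.decomp X
  conv_rhs => rw [hb, (𝔖.Λ b).norm_map]

lemma SDS.gamma_lip (𝔖 : SDS 𝒳 H S A) (X Y : H) : ‖𝔖.γ X - 𝔖.γ Y‖ ≤ ‖X - Y‖ := by
  have h2 : ‖𝔖.γ X - 𝔖.γ Y‖ ^ 2 ≤ ‖X - Y‖ ^ 2 := by
    rw [norm_sub_sq_real, norm_sub_sq_real, 𝔖.norm_gamma, 𝔖.norm_gamma]
    linarith [𝔖.inner_le X Y]
  have h3 := Real.sqrt_le_sqrt h2
  rwa [Real.sqrt_sq (norm_nonneg _), Real.sqrt_sq (norm_nonneg _)] at h3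

lemma SDS.tau_lip (𝔖 : SDS 𝒳 H S A) (a : A) (u v : 𝒳) : ‖𝔖.τ u - 𝔖.τ v‖ ≤ ‖u - v‖ := by
  rw [← 𝔖.γΛ a u, ← 𝔖.γΛ a v]
  calc ‖𝔖.γ (𝔖.Λ a u) - 𝔖.γ (𝔖.Λ a v)‖ ≤ ‖𝔖.Λ a u - 𝔖.Λ a v‖ := 𝔖.gamma_lip _ _
  _ = ‖u - v‖ := by rw [← map_sub, (𝔖.Λ a).norm_map]

lemma SDS.phi_tau (𝔖 : SDS 𝒳 H S A) (φ : 𝒳 → EReal)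
    (hφ : ∀ (s : S) (x : 𝒳), φ (𝔖.act s x) = φ x) (u : 𝒳) : φ (𝔖.τ u) = φ u := by
  obtain ⟨s, hs⟩ := 𝔖.τ_orbit u
  rw [hs, hφ]

lemma SDS.phi_symm (𝔖 : SDS 𝒳 H S A) (φ : 𝒳 → EReal)
    (hφ : ∀ (s : S) (x : 𝒳), φ (𝔖.act s x) = φ x) (s : S) (w : 𝒳) :
    φ ((𝔖.act s).symm w) = φ w := by
  conv_rhs => rw [← (𝔖.act s).apply_symm_apply w, hφ]

set_option maxHeartbeats 1000000 in
lemma SDS.tau_expand (𝔖 : SDS 𝒳 H S A) (a : A) (φ : 𝒳 → EReal)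
    (hφ : ∀ (s : S) (x : 𝒳), φ (𝔖.act s x) = φ x) (x g : 𝒳)
    (hg : EHasGradientAt φ g x) (s₀ : S) (hs₀ : 𝔖.τ x = 𝔖.act s₀ x) :
    ∀ ε : ℝ, 0 < ε → ∃ δ : ℝ, 0 < δ ∧ ∀ t : ℝ, |t| < δ →
      ‖𝔖.τ (x + t • g) - 𝔖.τ x - t • (𝔖.act s₀ g)‖ ≤ ε * |t| := by
  intro ε hε
  have hgp : (0:ℝ) < ‖g‖ + 1 := by positivity
  set ε₁ := min 1 (ε^2/(4*(‖g‖+1))) with hε₁def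
  have hε₁pos : 0 < ε₁ := lt_min one_pos (by positivity)
  have hε₁le1 : ε₁ ≤ 1 := min_le_left _ _
  have hε₁le : 4*(‖g‖+1)*ε₁ ≤ ε^2 := by
    have h := min_le_right 1 (ε^2/(4*(‖g‖+1)))
    calc 4*(‖g‖+1)*ε₁ ≤ 4*(‖g‖+1)*(ε^2/(4*(‖g‖+1))) := by
          apply mul_le_mul_of_nonneg_left h (by positivity)
    _ = ε^2 := by field_simp
  obtain ⟨δ₁, hδ₁pos, hδ₁⟩ := hg.2 ε₁ hε₁pos
  refine ⟨δ₁/(‖g‖+1), by positivity, ?_⟩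
  intro t ht
  have htg : |t| * ‖g‖ < δ₁ := by
    calc |t| * ‖g‖ ≤ |t| * (‖g‖+1) := by
          apply mul_le_mul_of_nonneg_left (by linarith) (abs_nonneg t)
    _ < δ₁ := by rw [← lt_div_iff₀ hgp]; exact ht
  have hz₁ : ‖x + t • g - x‖ = |t| * ‖g‖ := by
    rw [add_sub_cancel_left, norm_smul, Real.norm_eq_abs]
  obtain ⟨r₁, rx, hr₁, hrx, hineq₁⟩ := hδ₁ (x + t • g) (by rw [hz₁]; exact htg)
  set T := 𝔖.act s₀ with hT
  set p := 𝔖.τ (x + t • g) with hp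
  set y := T.symm p with hy
  have hTx : T.symm (𝔖.τ x) = x := by rw [hs₀]; exact T.symm_apply_apply x
  have hyx : y - x = T.symm (p - 𝔖.τ x) := by rw [map_sub, hTx]
  have hny : ‖y - x‖ ≤ |t| * ‖g‖ := by
    rw [hyx, T.symm.norm_map]
    calc ‖p - 𝔖.τ x‖ ≤ ‖x + t • g - x‖ := 𝔖.tau_lip a _ _
    _ = |t| * ‖g‖ := hz₁
  obtain ⟨r₂, rx', hr₂, hrx', hineq₂⟩ := hδ₁ y (lt_of_le_of_lt hny htg)
  have hrxx : rx' = rx := by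
    have := hrx'.symm.trans hrx; exact_mod_cast this
  have hφy : φ y = φ (x + t • g) := by
    rw [hy, 𝔖.phi_symm φ hφ, hp, 𝔖.phi_tau φ hφ]
  have hr₂₁ : r₂ = r₁ := by
    have := hr₂.symm.trans (hφy.trans hr₁); exact_mod_cast this
  have hi₁ : ⟪x + t • g - x, g⟫ = t * ‖g‖^2 := by
    rw [add_sub_cancel_left, real_inner_smul_left, real_inner_self_eq_norm_sq]
  rw [hi₁, hz₁] at hineq₁
  rw [hrxx, hr₂₁] at hineq₂
  set I := ⟪y - x, g⟫ with hI
  have habs : |I - t * ‖g‖^2| ≤ 2 * ε₁ * (|t| * ‖g‖) := by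
    have h1 := abs_sub_abs_le_abs_sub (r₁ - rx - I) (r₁ - rx - t*‖g‖^2)
    have h2 : |I - t*‖g‖^2| ≤ |r₁ - rx - t*‖g‖^2| + |r₁ - rx - I| := by
      have : I - t*‖g‖^2 = (r₁ - rx - t*‖g‖^2) - (r₁ - rx - I) := by ring
      rw [this]; exact abs_sub _ _
    have h3 : |r₁ - rx - I| ≤ ε₁ * (|t| * ‖g‖) :=
      le_trans hineq₂ (mul_le_mul_of_nonneg_left hny hε₁pos.le)
    linarith [h2, h3, hineq₁]
  have h3 : |t * I - t^2 * ‖g‖^2| ≤ |t| * (2 * ε₁ * (|t| * ‖g‖)) := by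
    have : t * I - t^2 * ‖g‖^2 = t * (I - t * ‖g‖^2) := by ring
    rw [this, abs_mul]
    exact mul_le_mul_of_nonneg_left habs (abs_nonneg t)
  have h3' := abs_le.mp h3
  have hm2 : ‖y - x‖^2 ≤ t^2 * ‖g‖^2 := by
    have h4 := pow_le_pow_left₀ (norm_nonneg (y - x)) hny 2
    rwa [mul_pow, sq_abs] at h4
  have key : ‖y - x - t • g‖^2 ≤ (ε * |t|)^2 := by
    have e1 : ‖y - x - t • g‖^2 = ‖y - x‖^2 - 2*(t * I) + t^2*‖g‖^2 := by
      rw [norm_sub_sq_real, real_inner_smul_right, norm_smul, Real.norm_eq_abs,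
        mul_pow, sq_abs, hI]
    have ha : |t| * (2 * ε₁ * (|t| * ‖g‖)) = 2 * ε₁ * (t^2 * ‖g‖) := by
      have h4 : |t| * (2 * ε₁ * (|t| * ‖g‖)) = 2 * ε₁ * ((|t| * |t|) * ‖g‖) := by ring
      rw [h4, abs_mul_abs_self, ← sq]
    rw [ha] at h3'
    have htI : t^2 * ‖g‖^2 - 2 * ε₁ * (t^2 * ‖g‖) ≤ t * I := by linarith [h3'.1]
    have h5 : (4 * (‖g‖+1) * ε₁) * t^2 ≤ ε^2 * t^2 :=
      mul_le_mul_of_nonneg_right hε₁le (sq_nonneg t)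
    have h6 : (0:ℝ) ≤ ε₁ * t^2 := by positivity
    have h7 : (ε * |t|)^2 = ε^2 * t^2 := by rw [mul_pow, sq_abs]
    rw [e1, h7]
    linarith [hm2, htI, h5, h6]
  have hfin : 𝔖.τ (x + t • g) - 𝔖.τ x - t • (𝔖.act s₀ g) = T (y - x - t • g) := by
    rw [map_sub, map_sub, map_smul, hy, T.apply_symm_apply, ← hT, ← hs₀, ← hp]
  rw [hfin, T.norm_map]
  have h5 := Real.sqrt_le_sqrt key
  rwa [Real.sqrt_sq (norm_nonneg _), Real.sqrt_sq (mul_nonneg hε.le (abs_nonneg t))] at h5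

set_option maxHeartbeats 1000000 in
lemma SDS.main_grad (𝔖 : SDS 𝒳 H S A) (a : A) (φ : 𝒳 → EReal)
    (hφ : ∀ (s : S) (x : 𝒳), φ (𝔖.act s x) = φ x) (x g : 𝒳)
    (hg : EHasGradientAt φ g x) :
    EHasGradientAt (fun Z => φ (𝔖.γ Z)) (𝔖.Λ a g) (𝔖.Λ a x) := by
  obtain ⟨s₀, hs₀⟩ := 𝔖.τ_orbit x
  set T := 𝔖.act s₀ with hT
  set G := T g with hG
  obtain ⟨rx₀, hrx₀⟩ := hg.1
  have hFx : φ (𝔖.γ (𝔖.Λ a x)) = φ x := by rw [𝔖.γΛ, 𝔖.phi_tau φ hφ]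
  constructor
  · exact ⟨rx₀, by show φ (𝔖.γ (𝔖.Λ a x)) = (rx₀ : EReal); rw [hFx]; exact hrx₀⟩
  intro ε hε
  set θ := 2/ε with hθ
  have hθpos : 0 < θ := by positivity
  have hθε : θ * ε = 2 := by rw [hθ]; field_simp
  set c := 1 + θ*‖g‖ + θ/2 with hc
  have hcpos : 0 < c := by positivity
  set ε₂ := min 1 (ε/(4*c)) with hε₂def
  have hε₂pos : 0 < ε₂ := lt_min one_pos (by positivity)
  have hε₂le1 : ε₂ ≤ 1 := min_le_left _ _
  have hε₂c : ε₂ * c ≤ ε/4 := by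
    have h := min_le_right 1 (ε/(4*c))
    calc ε₂ * c ≤ (ε/(4*c)) * c := mul_le_mul_of_nonneg_right h hcpos.le
    _ = ε/4 := by field_simp
  obtain ⟨δ₂, hδ₂pos, hexp⟩ := 𝔖.tau_expand a φ hφ x g hg s₀ hs₀ ε₂ hε₂pos
  obtain ⟨δ₁, hδ₁pos, hδ₁⟩ := hg.2 (ε/2) (by positivity)
  refine ⟨min δ₁ (δ₂/θ), lt_min hδ₁pos (by positivity), ?_⟩
  intro Z hZ
  set v := Z - 𝔖.Λ a x with hv
  set d := ‖v‖ with hd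
  have hdδ₁ : d < δ₁ := lt_of_lt_of_le hZ (min_le_left _ _)
  have hdδ₂ : θ * d < δ₂ := by
    have h := lt_of_lt_of_le hZ (min_le_right _ _)
    rw [lt_div_iff₀ hθpos] at h; linarith [h]
  by_cases hd0 : d = 0
  · have hZeq : Z = 𝔖.Λ a x := by
      have hv0 : v = 0 := by rw [← norm_eq_zero, ← hd]; exact hd0
      rw [hv, sub_eq_zero] at hv0; exact hv0
    refine ⟨rx₀, rx₀, ?_, ?_, ?_⟩
    · show φ (𝔖.γ Z) = (rx₀ : EReal); rw [hZeq, hFx]; exact hrx₀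
    · show φ (𝔖.γ (𝔖.Λ a x)) = (rx₀ : EReal); rw [hFx]; exact hrx₀
    · have hv0 : v = 0 := by rw [← norm_eq_zero, ← hd]; exact hd0
      rw [hv0, hd0]
      simp
  · have hdpos : 0 < d := lt_of_le_of_ne (norm_nonneg v) (Ne.symm hd0)
    set u := 𝔖.γ Z - 𝔖.τ x with hu
    have hτγ : 𝔖.γ (𝔖.Λ a x) = 𝔖.τ x := 𝔖.γΛ a x
    have hun : ‖u‖ ≤ d := by
      rw [hu, ← hτγ, hd, hv]; exact 𝔖.gamma_lip Z (𝔖.Λ a x)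
    set y := T.symm (𝔖.γ Z) with hy
    have hTx : T.symm (𝔖.τ x) = x := by rw [hs₀]; exact T.symm_apply_apply x
    have hyx : y - x = T.symm u := by rw [hy, hu, map_sub, hTx]
    have hynorm : ‖y - x‖ ≤ d := by rw [hyx, T.symm.norm_map]; exact hun
    obtain ⟨ry, rx', hry, hrx', hiny⟩ := hδ₁ y (lt_of_le_of_lt hynorm hdδ₁)
    have hrx'' : rx' = rx₀ := by
      have := hrx'.symm.trans hrx₀; exact_mod_cast this
    rw [hrx''] at hiny
    have hφyZ : φ y = φ (𝔖.γ Z) := 𝔖.phi_symm φ hφ s₀ (𝔖.γ Z)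
    refine ⟨ry, rx₀, ?_, ?_, ?_⟩
    · show φ (𝔖.γ Z) = (ry : EReal); rw [← hφyZ]; exact hry
    · show φ (𝔖.γ (𝔖.Λ a x)) = (rx₀ : EReal); rw [hFx]; exact hrx₀
    have hinner : ⟪y - x, g⟫ = ⟪u, G⟫ := by
      rw [hyx, hG]
      have h := T.inner_map_map (T.symm u) g
      rw [T.apply_symm_apply] at h
      exact h.symm
    set t := θ * d with ht
    have htpos : 0 < t := mul_pos hθpos hdpos
    have habs_t : |t| = t := abs_of_pos htpos
    have hexp_t := hexp t (by rw [habs_t]; exact hdδ₂)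
    have hexp_mt := hexp (-t) (by rw [abs_neg, habs_t]; exact hdδ₂)
    rw [habs_t] at hexp_t
    rw [abs_neg, habs_t] at hexp_mt
    set w := 𝔖.Λ a g with hw
    have hkey : ∀ r : ℝ, ‖𝔖.τ (x + r • g) - 𝔖.τ x - r • G‖ ≤ ε₂ * t →
        ‖u - r • G‖ ≤ ‖v - r • w‖ + ε₂ * t := by
      intro r hr
      have hsplit : u - r • G =
          (𝔖.γ Z - 𝔖.γ (𝔖.Λ a (x + r • g))) + (𝔖.τ (x + r • g) - 𝔖.τ x - r • G) := by
        rw [hu, 𝔖.γΛ a (x + r • g)]; abel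
      have hvr : Z - 𝔖.Λ a (x + r • g) = v - r • w := by
        rw [map_add, map_smul, hv, hw]; abel
      calc ‖u - r • G‖
          ≤ ‖𝔖.γ Z - 𝔖.γ (𝔖.Λ a (x + r • g))‖ + ‖𝔖.τ (x + r • g) - 𝔖.τ x - r • G‖ := by
            rw [hsplit]; exact norm_add_le _ _
        _ ≤ ‖Z - 𝔖.Λ a (x + r • g)‖ + ε₂ * t := add_le_add (𝔖.gamma_lip _ _) hr
        _ = ‖v - r • w‖ + ε₂ * t := by rw [hvr]
    have hkp := hkey t hexp_t
    have hkm : ‖u + t • G‖ ≤ ‖v + t • w‖ + ε₂ * t := by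
      have h := hkey (-t) hexp_mt
      rw [neg_smul, sub_neg_eq_add, neg_smul, sub_neg_eq_add] at h
      exact h
    have hnG : ‖G‖ = ‖g‖ := T.norm_map g
    have hnw : ‖w‖ = ‖g‖ := (𝔖.Λ a).norm_map g
    -- quadratic inequalities
    have hquad : ∀ (σ : ℝ), σ = 1 ∨ σ = -1 →
        2 * (t * (σ * (⟪v, w⟫ - ⟪u, G⟫))) ≤ d^2 + 2*(ε₂*t)*(d + t*‖g‖) + (ε₂*t)^2 := by
      intro σ hσ
      have hkk : ‖u - (σ*t) • G‖ ≤ ‖v - (σ*t) • w‖ + ε₂ * t := by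
        rcases hσ with h1 | h1
        · rw [h1, one_mul]; exact hkp
        · rw [h1]; rw [show (-1*t) • G = -(t • G) by rw [neg_one_mul, neg_smul],
            show (-1*t) • w = -(t • w) by rw [neg_one_mul, neg_smul],
            sub_neg_eq_add, sub_neg_eq_add]
          exact hkm
      have husq : ‖u - (σ*t) • G‖^2 = ‖u‖^2 - 2*((σ*t)*⟪u, G⟫) + (σ*t)^2*‖g‖^2 := by
        rw [norm_sub_sq_real, real_inner_smul_right, norm_smul, Real.norm_eq_abs,
          mul_pow, sq_abs, hnG]
      have hvsq : ‖v - (σ*t) • w‖^2 = d^2 - 2*((σ*t)*⟪v, w⟫) + (σ*t)^2*‖g‖^2 := by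
        rw [norm_sub_sq_real, real_inner_smul_right, norm_smul, Real.norm_eq_abs,
          mul_pow, sq_abs, hnw, hd]
      have hB : ‖v - (σ*t) • w‖ ≤ d + t*‖g‖ := by
        calc ‖v - (σ*t) • w‖ ≤ ‖v‖ + ‖(σ*t) • w‖ := norm_sub_le _ _
        _ = d + |σ*t| * ‖g‖ := by rw [norm_smul, Real.norm_eq_abs, hnw, hd]
        _ = d + t*‖g‖ := by
            rcases hσ with h1 | h1 <;> rw [h1] <;>
              simp [abs_of_pos htpos, htpos.le, abs_of_nonneg]
      have hsq : ‖u - (σ*t) • G‖^2 ≤ (‖v - (σ*t) • w‖ + ε₂*t)^2 := by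
        apply pow_le_pow_left₀ (norm_nonneg _) hkk
      have hexpand : (‖v - (σ*t) • w‖ + ε₂*t)^2 =
          ‖v - (σ*t) • w‖^2 + 2*(ε₂*t)*‖v - (σ*t) • w‖ + (ε₂*t)^2 := by ring
      have hBe : 2*(ε₂*t)*‖v - (σ*t) • w‖ ≤ 2*(ε₂*t)*(d + t*‖g‖) :=
        mul_le_mul_of_nonneg_left hB (by positivity)
      have hu2 : (0:ℝ) ≤ ‖u‖^2 := sq_nonneg _
      rw [hexpand] at hsq
      rw [husq, hvsq] at hsq
      have hgoal' : 2 * (t * (σ * (⟪v, w⟫ - ⟪u, G⟫)))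
          = 2*((σ*t)*⟪v, w⟫) - 2*((σ*t)*⟪u, G⟫) := by ring
      rw [hgoal']
      linarith [hsq, hBe, hu2]
    have h1q := hquad 1 (Or.inl rfl)
    have h2q := hquad (-1) (Or.inr rfl)
    rw [one_mul] at h1q
    have h2q' : 2 * (t * (⟪u, G⟫ - ⟪v, w⟫)) ≤ d^2 + 2*(ε₂*t)*(d + t*‖g‖) + (ε₂*t)^2 := by
      have : -1 * (⟪v, w⟫ - ⟪u, G⟫) = ⟪u, G⟫ - ⟪v, w⟫ := by ring
      rwa [this] at h2q
    -- reduce the RHS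
    have hε₂sq : ε₂^2 ≤ ε₂ := by
      calc ε₂^2 = ε₂ * ε₂ := sq ε₂
      _ ≤ 1 * ε₂ := mul_le_mul_of_nonneg_right hε₂le1 hε₂pos.le
      _ = ε₂ := one_mul ε₂
    have hrhs : d^2 + 2*(ε₂*t)*(d + t*‖g‖) + (ε₂*t)^2 ≤ 2*d^2 := by
      have e2 : ε₂*(1 + θ*‖g‖) + ε₂^2*(θ/2) ≤ ε/4 := by
        have h5 : ε₂^2*(θ/2) ≤ ε₂*(θ/2) :=
          mul_le_mul_of_nonneg_right hε₂sq (by positivity)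
        have h6 : ε₂*(1 + θ*‖g‖) + ε₂*(θ/2) = ε₂ * c := by rw [hc]; ring
        linarith [hε₂c]
      have e3 : 2*θ*d^2 * (ε₂*(1 + θ*‖g‖) + ε₂^2*(θ/2)) ≤ 2*θ*d^2 * (ε/4) :=
        mul_le_mul_of_nonneg_left e2 (by positivity)
      have e4 : 2*(ε₂*t)*(d + t*‖g‖) + (ε₂*t)^2 = 2*θ*d^2 * (ε₂*(1 + θ*‖g‖) + ε₂^2*(θ/2)) := by
        rw [ht]; ring
      have e5 : 2*θ*d^2 * (ε/4) = (θ*ε)/2 * d^2 := by ring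
      have e6 : (θ*ε)/2 * d^2 = d^2 := by rw [hθε]; ring
      linarith [e3, e4, e5, e6]
    have hDp : ⟪v, w⟫ - ⟪u, G⟫ ≤ (ε/2) * d := by
      have h7 : 2*(t*(⟪v, w⟫ - ⟪u, G⟫)) ≤ 2*d^2 := le_trans h1q hrhs
      have hεne : ε ≠ 0 := ne_of_gt hε
      have h8 : 2*d^2 = 2*t*((ε/2)*d) := by rw [ht, hθ]; field_simp
      rw [h8] at h7
      have h9 : 2*(t*(⟪v, w⟫ - ⟪u, G⟫)) = 2*t*(⟪v, w⟫ - ⟪u, G⟫) := by ring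
      rw [h9] at h7
      exact le_of_mul_le_mul_left h7 (by positivity)
    have hDm : ⟪u, G⟫ - ⟪v, w⟫ ≤ (ε/2) * d := by
      have h7 : 2*(t*(⟪u, G⟫ - ⟪v, w⟫)) ≤ 2*d^2 := le_trans h2q' hrhs
      have hεne : ε ≠ 0 := ne_of_gt hε
      have h8 : 2*d^2 = 2*t*((ε/2)*d) := by rw [ht, hθ]; field_simp
      rw [h8] at h7
      have h9 : 2*(t*(⟪u, G⟫ - ⟪v, w⟫)) = 2*t*(⟪u, G⟫ - ⟪v, w⟫) := by ring
      rw [h9] at h7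
      exact le_of_mul_le_mul_left h7 (by positivity)
    -- assemble
    rw [hinner] at hiny
    have hiny' : |ry - rx₀ - ⟪u, G⟫| ≤ (ε/2) * d :=
      le_trans hiny (mul_le_mul_of_nonneg_left hynorm (by positivity))
    have habs := abs_le.mp hiny'
    rw [abs_le]
    constructor
    · linarith [habs.1, hDp]
    · linarith [habs.2, hDm]

lemma EHasGradientAt.unique {E : Type*} [NormedAddCommGroup E] [InnerProductSpace ℝ E]
    {f : E → EReal} {g₁ g₂ x : E}
    (h₁ : EHasGradientAt f g₁ x) (h₂ : EHasGradientAt f g₂ x) : g₁ = g₂ := by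
  have key : ∀ ε : ℝ, 0 < ε → ‖g₁ - g₂‖ ≤ 2 * ε := by
    intro ε hε
    obtain ⟨δ₁, hδ₁pos, hδ₁⟩ := h₁.2 ε hε
    obtain ⟨δ₂, hδ₂pos, hδ₂⟩ := h₂.2 ε hε
    by_cases hgg : g₁ - g₂ = 0
    · rw [hgg, norm_zero]; positivity
    · have hn : 0 < ‖g₁ - g₂‖ := norm_pos_iff.mpr hgg
      set tt := min δ₁ δ₂ / (2 * ‖g₁ - g₂‖) with htt
      have httpos : 0 < tt := by positivity
      set z := x + tt • (g₁ - g₂) with hz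
      have hzx : ‖z - x‖ = tt * ‖g₁ - g₂‖ := by
        rw [hz, add_sub_cancel_left, norm_smul, Real.norm_eq_abs, abs_of_pos httpos]
      have hzd : ‖z - x‖ < min δ₁ δ₂ := by
        have he : tt * ‖g₁ - g₂‖ = min δ₁ δ₂ / 2 := by
          rw [htt]; field_simp
        rw [hzx, he]
        exact half_lt_self (lt_min hδ₁pos hδ₂pos)
      obtain ⟨rz₁, rx₁, hrz₁, hrx₁, hin₁⟩ := hδ₁ z (lt_of_lt_of_le hzd (min_le_left _ _))
      obtain ⟨rz₂, rx₂, hrz₂, hrx₂, hin₂⟩ := hδ₂ z (lt_of_lt_of_le hzd (min_le_right _ _))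
      have e1 : rz₂ = rz₁ := by have := hrz₂.symm.trans hrz₁; exact_mod_cast this
      have e2 : rx₂ = rx₁ := by have := hrx₂.symm.trans hrx₁; exact_mod_cast this
      rw [e1, e2] at hin₂
      have hdiff : |⟪z - x, g₁⟫ - ⟪z - x, g₂⟫| ≤ 2 * ε * ‖z - x‖ := by
        have h := abs_sub (rz₁ - rx₁ - ⟪z - x, g₂⟫) (rz₁ - rx₁ - ⟪z - x, g₁⟫)
        have e3 : (rz₁ - rx₁ - ⟪z - x, g₂⟫) - (rz₁ - rx₁ - ⟪z - x, g₁⟫)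
            = ⟪z - x, g₁⟫ - ⟪z - x, g₂⟫ := by ring
        rw [e3] at h
        calc |⟪z - x, g₁⟫ - ⟪z - x, g₂⟫| ≤ _ + _ := h
        _ ≤ ε * ‖z - x‖ + ε * ‖z - x‖ := add_le_add hin₂ hin₁
        _ = 2 * ε * ‖z - x‖ := by ring
      have hipt : ⟪z - x, g₁⟫ - ⟪z - x, g₂⟫ = tt * ‖g₁ - g₂‖^2 := by
        rw [← inner_sub_right, hz, add_sub_cancel_left, real_inner_smul_left,
          real_inner_self_eq_norm_sq]
      rw [hipt, hzx] at hdiff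
      have h9 : tt * ‖g₁ - g₂‖^2 ≤ 2 * ε * (tt * ‖g₁ - g₂‖) := le_trans (le_abs_self _) hdiff
      have h10 : tt * ‖g₁ - g₂‖ * ‖g₁ - g₂‖ ≤ tt * ‖g₁ - g₂‖ * (2*ε) := by
        have e : tt * ‖g₁ - g₂‖^2 = tt * ‖g₁ - g₂‖ * ‖g₁ - g₂‖ := by ring
        have e2 : 2 * ε * (tt * ‖g₁ - g₂‖) = tt * ‖g₁ - g₂‖ * (2*ε) := by ring
        rw [e, e2] at h9
        exact h9
      have h11 := le_of_mul_le_mul_left h10 (by positivity : 0 < tt * ‖g₁ - g₂‖)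
      linarith
  by_contra hne
  have hn : 0 < ‖g₁ - g₂‖ := norm_pos_iff.mpr (sub_ne_zero_of_ne hne)
  have := key (‖g₁ - g₂‖/4) (by positivity)
  linarith

lemma SDS.comp_grad (𝔖 : SDS 𝒳 H S A) [CompleteSpace 𝒳] [CompleteSpace H] (a : A)
    (φ : 𝒳 → EReal) (hφ : ∀ (s : S) (x : 𝒳), φ (𝔖.act s x) = φ x) (x : 𝒳) (h₀ : H)
    (hF : EHasGradientAt (fun Z => φ (𝔖.γ Z)) h₀ (𝔖.Λ a x)) :
    ∃ g : 𝒳, EHasGradientAt φ g x := by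
  set L := (𝔖.Λ a).toContinuousLinearMap with hL
  refine ⟨(ContinuousLinearMap.adjoint L) h₀, ?_⟩
  have hφΛ : ∀ z : 𝒳, φ (𝔖.γ (𝔖.Λ a z)) = φ z := by
    intro z; rw [𝔖.γΛ, 𝔖.phi_tau φ hφ]
  constructor
  · obtain ⟨r, hr⟩ := hF.1
    exact ⟨r, by rw [← hφΛ x]; exact hr⟩
  intro ε hε
  obtain ⟨δ, hδpos, hδ⟩ := hF.2 ε hε
  refine ⟨δ, hδpos, ?_⟩
  intro z hz
  have hzn : ‖𝔖.Λ a z - 𝔖.Λ a x‖ < δ := by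
    rw [← map_sub, (𝔖.Λ a).norm_map]; exact hz
  obtain ⟨rz, rx, hrz, hrx, hin⟩ := hδ (𝔖.Λ a z) hzn
  refine ⟨rz, rx, ?_, ?_, ?_⟩
  · rw [← hφΛ z]; exact hrz
  · rw [← hφΛ x]; exact hrx
  · have hip : ⟪𝔖.Λ a z - 𝔖.Λ a x, h₀⟫ = ⟪z - x, (ContinuousLinearMap.adjoint L) h₀⟫ := by
      rw [← map_sub]
      have h := (ContinuousLinearMap.adjoint_inner_right L (z - x) h₀).symm
      simpa [hL, LinearIsometry.coe_toContinuousLinearMap] using h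
    rw [← map_sub, (𝔖.Λ a).norm_map] at hzn
    calc |rz - rx - ⟪z - x, (ContinuousLinearMap.adjoint L) h₀⟫|
        = |rz - rx - ⟪𝔖.Λ a z - 𝔖.Λ a x, h₀⟫| := by rw [hip]
    _ ≤ ε * ‖𝔖.Λ a z - 𝔖.Λ a x‖ := hin
    _ = ε * ‖z - x‖ := by rw [← map_sub, (𝔖.Λ a).norm_map]

/-- For an `S`-invariant `φ : 𝒳 → [-∞, +∞]`, `x ∈ 𝒳` with `φ(x) ∈ ℝ` and `a ∈ A`:
`φ ∘ γ` is Fréchet differentiable at `Λ_a x` iff `φ` is Fréchet differentiable at `x`,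
in which case `∇(φ ∘ γ)(Λ_a x) = Λ_a (∇φ(x))`. -/
theorem frechet_diff_lambda_iff
    [FiniteDimensional ℝ 𝒳] [FiniteDimensional ℝ H]
    (𝔖 : SDS 𝒳 H S A) (hcl : IsClosed 𝔖.LambdaSet)
    (φ : 𝒳 → EReal) (hφ : ∀ (s : S) (x : 𝒳), φ (𝔖.act s x) = φ x)
    (x : 𝒳) (hx : ∃ r : ℝ, φ x = (r : EReal)) (a : A) :
    (EFDiffAt (fun Z => φ (𝔖.γ Z)) (𝔖.Λ a x) ↔ EFDiffAt φ x) ∧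
    (∀ g : 𝒳, EHasGradientAt φ g x →
      EHasGradientAt (fun Z => φ (𝔖.γ Z)) (𝔖.Λ a g) (𝔖.Λ a x)) := by
  constructor
  · constructor
    · rintro ⟨h₀, hh₀, -⟩
      obtain ⟨g, hgr⟩ := 𝔖.comp_grad a φ hφ x h₀ hh₀
      exact ⟨g, hgr, fun g' hg' => hg'.unique hgr⟩
    · rintro ⟨g, hgr, -⟩
      exact ⟨𝔖.Λ a g, 𝔖.main_grad a φ hφ x g hgr,
        fun h' hh' => hh'.unique (𝔖.main_grad a φ hφ x g hgr)⟩
  · intro g hgr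
    exact 𝔖.main_grad a φ hφ x g hgr
end
end

section
/- Suppose (𝒳, S, γ, (Λ_a)_{a∈A}) is a spectral decomposition system for a Euclidean space 𝔥 with {Λ_a : a ∈ A} closed in L(𝒳,𝔥). Let φ : 𝒳 → [−∞,+∞] be S-invariant and let X ∈ 𝔥 be such that φ(γ(X)) ∈ ℝ. Then φ∘γ is Fréchet differentiable at X if and only if φ is Fréchet differentiable at γ(X), in which case ∇(φ∘γ)(X) = Λ_a(∇φ(γ(X))) for every a ∈ A_X. -/
open Filter Topology Set Metric
open scoped RealInnerProductSpace

noncomputable section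

variable {𝒳 H S A : Type*} [NormedAddCommGroup 𝒳] [InnerProductSpace ℝ 𝒳]
    [NormedAddCommGroup H] [InnerProductSpace ℝ H] [Group S]

namespace SDSAux

lemma sq_le_imp {a b : ℝ} (ha : 0 ≤ a) (hb : 0 ≤ b) (h : a^2 ≤ b^2) : a ≤ b := by
  nlinarith

lemma quadA {d I t ε : ℝ} (h5 : t * I ≤ t * (ε * d)) :
    -(d^2)/2 + t * I ≤ ε * ε * (t * t) / 2 := by
  nlinarith [sq_nonneg (d - ε * t)]

lemma quadB {d I t ε c : ℝ} (h5 : t * I ≤ c) (h6 : c ≤ d * (d/2))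
    (hq : 0 ≤ ε * ε * (t * t)) : -(d^2)/2 + t * I ≤ ε * ε * (t * t) / 2 := by
  nlinarith

lemma k_le_k2 {k : ℝ} (h : 1 ≤ k) : k ≤ k * k := by nlinarith

lemma amgm (x y : ℝ) : x * y ≤ (x^2 + y^2)/2 := by nlinarith [sq_nonneg (x - y)]

lemma ss_le_one {s : ℝ} (h0 : 0 ≤ s) (h1 : s ≤ 1) : s * s ≤ 1 := by nlinarith

variable (𝔖 : SDS 𝒳 H S A)

lemma norm_gamma (U : H) : ‖𝔖.γ U‖ = ‖U‖ := by
  obtain ⟨b, hb⟩ := 𝔖.decomp U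
  conv_rhs => rw [hb, (𝔖.Λ b).norm_map]

lemma gamma_lip (U V : H) : ‖𝔖.γ U - 𝔖.γ V‖ ≤ ‖U - V‖ := by
  have h1 : ‖𝔖.γ U - 𝔖.γ V‖ ^ 2 ≤ ‖U - V‖ ^ 2 := by
    rw [norm_sub_sq_real, norm_sub_sq_real, norm_gamma, norm_gamma]
    have := 𝔖.inner_le U V
    linarith
  exact sq_le_imp (norm_nonneg _) (norm_nonneg _) h1

lemma norm_tau (x : 𝒳) : ‖𝔖.τ x‖ = ‖x‖ := by
  obtain ⟨s, hs⟩ := 𝔖.τ_orbit x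
  rw [hs, (𝔖.act s).norm_map]

lemma tau_lip (a : A) (x y : 𝒳) : ‖𝔖.τ x - 𝔖.τ y‖ ≤ ‖x - y‖ := by
  rw [← 𝔖.γΛ a x, ← 𝔖.γΛ a y]
  calc ‖𝔖.γ (𝔖.Λ a x) - 𝔖.γ (𝔖.Λ a y)‖ ≤ ‖𝔖.Λ a x - 𝔖.Λ a y‖ := gamma_lip 𝔖 _ _
    _ = ‖x - y‖ := by rw [← map_sub, (𝔖.Λ a).norm_map]

lemma tau_gamma (U : H) : 𝔖.τ (𝔖.γ U) = 𝔖.γ U := by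
  obtain ⟨b, hb⟩ := 𝔖.decomp U
  conv_rhs => rw [hb, 𝔖.γΛ b (𝔖.γ U)]

lemma phi_tau (φ : 𝒳 → EReal) (hφ : ∀ (s : S) (x : 𝒳), φ (𝔖.act s x) = φ x) (x : 𝒳) :
    φ (𝔖.τ x) = φ x := by
  obtain ⟨s, hs⟩ := 𝔖.τ_orbit x
  rw [hs, hφ]

lemma factR {X : H} {a : A} (ha : 𝔖.Λ a (𝔖.γ X) = X) (x : 𝒳) :
    ⟪x, 𝔖.γ X⟫ ≤ ⟪𝔖.τ x, 𝔖.γ X⟫ := by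
  have h1 : ⟪𝔖.Λ a x, X⟫ = ⟪x, 𝔖.γ X⟫ := by
    conv_lhs => rw [← ha]
    rw [(𝔖.Λ a).inner_map_map]
  have h2 : ⟪𝔖.Λ a x, X⟫ ≤ ⟪𝔖.γ (𝔖.Λ a x), 𝔖.γ X⟫ := 𝔖.inner_le _ _
  rw [𝔖.γΛ a x] at h2
  linarith

theorem EHasGradientAt_unique {E : Type*} [NormedAddCommGroup E] [InnerProductSpace ℝ E]
    {f : E → EReal} {g₁ g₂ x : E} (h₁ : EHasGradientAt f g₁ x) (h₂ : EHasGradientAt f g₂ x) :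
    g₁ = g₂ := by
  by_contra hne
  have hv : g₁ - g₂ ≠ 0 := sub_ne_zero.mpr hne
  have hvn : 0 < ‖g₁ - g₂‖ := norm_pos_iff.mpr hv
  have key : ∀ ε : ℝ, 0 < ε → ‖g₁ - g₂‖ ≤ 2 * ε := by
    intro ε hε
    obtain ⟨δ₁, hδ₁, H₁⟩ := h₁.2 ε hε
    obtain ⟨δ₂, hδ₂, H₂⟩ := h₂.2 ε hε
    set v := g₁ - g₂ with hvdef
    set t : ℝ := min δ₁ δ₂ / (2 * ‖v‖) with htdef
    have ht : 0 < t := by positivity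
    set z := x + t • v with hzdef
    have hz : z - x = t • v := by simp [hzdef]
    have hn : ‖z - x‖ = t * ‖v‖ := by
      rw [hz, norm_smul, Real.norm_of_nonneg ht.le]
    have hmin : t * ‖v‖ < min δ₁ δ₂ := by
      rw [htdef]
      rw [div_mul_eq_mul_div, mul_comm]
      rw [div_lt_iff₀ (by positivity)]
      nlinarith [lt_min hδ₁ hδ₂]
    obtain ⟨rz₁, rx₁, e₁, e₂, e₃⟩ := H₁ z (by rw [hn]; exact hmin.trans_le (min_le_left _ _))
    obtain ⟨rz₂, rx₂, f₁, f₂, f₃⟩ := H₂ z (by rw [hn]; exact hmin.trans_le (min_le_right _ _))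
    have hrz : rz₁ = rz₂ := by
      have := e₁.symm.trans f₁; exact_mod_cast this
    have hrx : rx₁ = rx₂ := by
      have := e₂.symm.trans f₂; exact_mod_cast this
    have hinner : ⟪z - x, g₁⟫ - ⟪z - x, g₂⟫ = t * ‖v‖ ^ 2 := by
      rw [← inner_sub_right, hz, real_inner_smul_left, ← hvdef, real_inner_self_eq_norm_sq]
    have habs : |⟪z - x, g₁⟫ - ⟪z - x, g₂⟫| ≤ 2 * ε * (t * ‖v‖) := by
      have e₃' := e₃
      rw [hrz, hrx] at e₃'
      calc |⟪z - x, g₁⟫ - ⟪z - x, g₂⟫|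
          = |(rz₂ - rx₂ - ⟪z - x, g₂⟫) - (rz₂ - rx₂ - ⟪z - x, g₁⟫)| := by ring_nf
        _ ≤ |rz₂ - rx₂ - ⟪z - x, g₂⟫| + |rz₂ - rx₂ - ⟪z - x, g₁⟫| := abs_sub _ _
        _ ≤ ε * ‖z - x‖ + ε * ‖z - x‖ := add_le_add f₃ e₃'
        _ = 2 * ε * (t * ‖v‖) := by rw [hn]; ring
    rw [hinner] at habs
    rw [abs_of_nonneg (by positivity)] at habs
    have : t * ‖v‖ ^ 2 ≤ 2 * ε * (t * ‖v‖) := habs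
    nlinarith [mul_pos ht hvn]
  have := key (‖g₁ - g₂‖ / 4) (by positivity)
  linarith


set_option maxHeartbeats 2000000 in
lemma oneside {X : H} {a : A} (ha : 𝔖.Λ a (𝔖.γ X) = X)
    {g' : 𝒳} {ε δ : ℝ} (hε : 0 < ε) (hε1 : ε ≤ 1) (hδ : 0 < δ)
    (hU : ∀ w : 𝒳, ‖w - 𝔖.γ X‖ < δ → |⟪𝔖.τ w - w, g'⟫| ≤ 2 * ε * ‖w - 𝔖.γ X‖)
    (hL3 : ∀ q : 𝒳, (∃ s' : S, q = 𝔖.act s' (𝔖.γ X)) → ‖q - 𝔖.γ X‖ < δ →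
      |⟪q - 𝔖.γ X, g'⟫| ≤ ε * ‖q - 𝔖.γ X‖)
    {Z : H} (hZX : Z ≠ X)
    (hZ : ‖Z - X‖ < Real.sqrt ε * δ / (2 * (‖g'‖ + 1))) :
    ⟪Z - X, 𝔖.Λ a g'⟫ - ⟪𝔖.γ Z - 𝔖.γ X, g'⟫ ≤
      3 * (‖g'‖ + 1) * Real.sqrt ε * ‖Z - X‖ := by
  set p := 𝔖.γ X with hp
  set k := ‖g'‖ + 1 with hk
  have hk1 : (1:ℝ) ≤ k := by rw [hk]; linarith [norm_nonneg g']
  have hgk : ‖g'‖ ≤ k := by rw [hk]; linarith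
  set s := Real.sqrt ε with hs
  have hspos : 0 < s := Real.sqrt_pos.mpr hε
  have hs1 : s ≤ 1 := Real.sqrt_le_one.mpr hε1
  have hssq : s * s = ε := Real.mul_self_sqrt hε.le
  set r := ‖Z - X‖ with hr
  have hrpos : 0 < r := by rw [hr]; exact norm_pos_iff.mpr (sub_ne_zero.mpr hZX)
  set t := r / s with ht
  have htpos : 0 < t := by positivity
  have hrts : r = t * s := by rw [ht]; field_simp
  have htk : t * (2 * k) < δ := by
    have h2k : (0:ℝ) < 2 * k := by positivity
    have h1 : r * (2 * k) < s * δ := (lt_div_iff₀ h2k).mp hZ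
    rw [ht, div_mul_eq_mul_div, div_lt_iff₀ hspos]
    linarith
  have htg : t * ‖g'‖ < δ / 2 := by
    have h1 : t * ‖g'‖ ≤ t * k := mul_le_mul_of_nonneg_left hgk htpos.le
    linarith
  set w := p + t • g' with hw
  have hwp : w - p = t • g' := by rw [hw]; abel
  have hwn : ‖w - p‖ = t * ‖g'‖ := by
    rw [hwp, norm_smul, Real.norm_of_nonneg htpos.le]
  have hwδ : ‖w - p‖ < δ := by rw [hwn]; linarith
  have innw : ∀ x : 𝒳, ⟪x, w⟫ = ⟪x, p⟫ + t * ⟪x, g'⟫ := by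
    intro x; rw [hw, inner_add_right, real_inner_smul_right]
  set e := 𝔖.τ w - w with he
  set u := 𝔖.γ Z - p with hu
  have hun : ‖u‖ ≤ r := by rw [hu, hp, hr]; exact gamma_lip 𝔖 Z X
  -- Step (3) : ⟪p, e⟫ ≤ ε * ε * (t * t) / 2
  have pe : ⟪p, e⟫ ≤ ε * ε * (t * t) / 2 := by
    obtain ⟨sg, hsg⟩ := 𝔖.τ_orbit w
    set q := 𝔖.act sg⁻¹ p with hq
    have hqorb : ∃ s' : S, q = 𝔖.act s' p := ⟨sg⁻¹, rfl⟩
    have hinv : 𝔖.act sg q = p := by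
      rw [hq, map_inv]
      exact (𝔖.act sg).apply_symm_apply p
    have hptw : ⟪p, 𝔖.τ w⟫ = ⟪q, w⟫ := by
      rw [hsg]
      calc ⟪p, 𝔖.act sg w⟫ = ⟪𝔖.act sg q, 𝔖.act sg w⟫ := by rw [hinv]
        _ = ⟪q, w⟫ := (𝔖.act sg).inner_map_map q w
    have hqn : ‖q‖ = ‖p‖ := by rw [hq]; exact (𝔖.act sg⁻¹).norm_map p
    have hqpp : ⟪q - p, p⟫ = -(‖q - p‖^2) / 2 := by
      have h2 := norm_sub_sq_real q p
      rw [hqn] at h2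
      rw [inner_sub_left, real_inner_self_eq_norm_sq]
      linarith
    have hpe : ⟪p, e⟫ = ⟪q - p, p⟫ + t * ⟪q - p, g'⟫ := by
      calc ⟪p, e⟫ = ⟪p, 𝔖.τ w⟫ - ⟪p, w⟫ := by rw [he, inner_sub_right]
        _ = ⟪q - p, w⟫ := by rw [hptw, ← inner_sub_left]
        _ = ⟪q - p, p⟫ + t * ⟪q - p, g'⟫ := innw (q - p)
    rcases lt_or_ge (‖q - p‖) δ with hcase | hcase
    · have h3 := hL3 q hqorb hcase
      have habs : ⟪q - p, g'⟫ ≤ ε * ‖q - p‖ := (abs_le.mp h3).2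
      have h5 : t * ⟪q - p, g'⟫ ≤ t * (ε * ‖q - p‖) :=
        mul_le_mul_of_nonneg_left habs htpos.le
      rw [hpe, hqpp]
      exact quadA h5
    · have habs : ⟪q - p, g'⟫ ≤ ‖q - p‖ * ‖g'‖ := by
        calc ⟪q - p, g'⟫ ≤ |⟪q - p, g'⟫| := le_abs_self _
          _ ≤ ‖q - p‖ * ‖g'‖ := abs_real_inner_le_norm _ _
      have h5 : t * ⟪q - p, g'⟫ ≤ ‖q - p‖ * (t * ‖g'‖) := by
        have h5' := mul_le_mul_of_nonneg_left habs htpos.le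
        linarith
      have h6 : ‖q - p‖ * (t * ‖g'‖) ≤ ‖q - p‖ * (‖q - p‖ / 2) := by
        have hqpos : (0:ℝ) < ‖q - p‖ := lt_of_lt_of_le hδ hcase
        have h7 : t * ‖g'‖ ≤ ‖q - p‖ / 2 := by linarith
        exact mul_le_mul_of_nonneg_left h7 hqpos.le
      rw [hpe, hqpp]
      exact quadB h5 h6 (by positivity)
  -- Step (4) : ⟪u, e⟫ ≤ r * (2 * (t * (s * k)))
  have hUw := hU w hwδ
  rw [← he] at hUw
  have h3e : -(2 * ε * (t * ‖g'‖)) ≤ ⟪e, g'⟫ := by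
    have := (abs_le.mp hUw).1
    rw [hwn] at this
    linarith
  have hτn : ‖𝔖.τ w‖ = ‖w‖ := norm_tau 𝔖 w
  have hτww : ⟪𝔖.τ w, w⟫ = ⟪𝔖.τ w, p⟫ + t * ⟪𝔖.τ w, g'⟫ := innw (𝔖.τ w)
  have hsplit : ⟪𝔖.τ w, g'⟫ = ⟪w, g'⟫ + ⟪e, g'⟫ := by
    rw [he, inner_sub_left]; ring
  have hww : ⟪w, p⟫ + t * ⟪w, g'⟫ = ‖w‖^2 := by
    rw [← innw w]; exact real_inner_self_eq_norm_sq w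
  have h4 : ‖w‖^2 - 2*ε*(t*(t*‖g'‖)) ≤ ⟪𝔖.τ w, w⟫ := by
    have h2 := factR 𝔖 ha w
    have h5 : t * (-(2 * ε * (t * ‖g'‖))) ≤ t * ⟪e, g'⟫ :=
      mul_le_mul_of_nonneg_left h3e htpos.le
    rw [hτww, hsplit, mul_add]
    linarith
  have hee : ‖e‖^2 ≤ (2*(t*(s*k)))^2 := by
    have h6 : ‖e‖^2 = 2*(‖w‖^2 - ⟪𝔖.τ w, w⟫) := by
      have h7 := norm_sub_sq_real (𝔖.τ w) w
      rw [← he, hτn] at h7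
      rw [h7]; ring
    have h8 : ε * k ≤ (s*k)^2 := by
      have h8' : (s*k)^2 = (s*s)*(k*k) := by ring
      rw [h8', hssq]
      exact mul_le_mul_of_nonneg_left (k_le_k2 hk1) hε.le
    have h9 : ε * ‖g'‖ ≤ ε * k := mul_le_mul_of_nonneg_left hgk hε.le
    have h10 : t*t*(ε*‖g'‖) ≤ t*t*((s*k)^2) :=
      mul_le_mul_of_nonneg_left (h9.trans h8) (by positivity)
    rw [h6]
    linarith
  have hen : ‖e‖ ≤ 2*(t*(s*k)) :=
    sq_le_imp (norm_nonneg e) (by positivity) hee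
  have hue : ⟪u, e⟫ ≤ r * (2*(t*(s*k))) := by
    calc ⟪u, e⟫ ≤ |⟪u, e⟫| := le_abs_self _
      _ ≤ ‖u‖ * ‖e‖ := abs_real_inner_le_norm _ _
      _ ≤ r * (2*(t*(s*k))) := mul_le_mul hun hen (norm_nonneg e) hrpos.le
  -- Step (5)
  have hZXin : ⟪𝔖.γ Z, p⟫ - r^2 / 2 ≤ ⟪Z, X⟫ := by
    have h1 := norm_sub_sq_real Z X
    have h2 : ⟪𝔖.γ Z, p⟫ ≤ ‖𝔖.γ Z‖ * ‖p‖ := real_inner_le_norm _ _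
    have h3 : ‖𝔖.γ Z‖ = ‖Z‖ := norm_gamma 𝔖 Z
    have h4' : ‖p‖ = ‖X‖ := by rw [hp]; exact norm_gamma 𝔖 X
    rw [h3, h4'] at h2
    have h5 := amgm ‖Z‖ ‖X‖
    linarith
  -- Step (6) : assemble
  have main : ⟪Z, 𝔖.Λ a w⟫ ≤ ⟪𝔖.γ Z, 𝔖.τ w⟫ := by
    have h1 := 𝔖.inner_le Z (𝔖.Λ a w)
    rwa [𝔖.γΛ a w] at h1
  have lhs_eq : ⟪Z, 𝔖.Λ a w⟫ = ⟪Z, X⟫ + t * ⟪Z, 𝔖.Λ a g'⟫ := by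
    rw [hw, map_add, map_smul, inner_add_right, real_inner_smul_right, ha]
  have rhs_eq : ⟪𝔖.γ Z, 𝔖.τ w⟫ =
      ⟪𝔖.γ Z, p⟫ + t * ⟪𝔖.γ Z, g'⟫ + (⟪p, e⟫ + ⟪u, e⟫) := by
    have h1 : 𝔖.τ w = w + e := by rw [he]; abel
    have h2 : ⟪𝔖.γ Z, e⟫ = ⟪p, e⟫ + ⟪u, e⟫ := by
      rw [hu, inner_sub_left]; ring
    rw [h1, inner_add_right, innw (𝔖.γ Z), h2]
  have hXg : ⟪X, 𝔖.Λ a g'⟫ = ⟪p, g'⟫ := by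
    conv_lhs => rw [← ha]
    rw [(𝔖.Λ a).inner_map_map]
  clear_value p k s r t w e u
  have step : t * ⟪Z, 𝔖.Λ a g'⟫ ≤
      t * ⟪𝔖.γ Z, g'⟫ + (r^2/2 + ε*ε*(t*t)/2 + r * (2*(t*(s*k)))) := by
    rw [lhs_eq] at main
    rw [rhs_eq] at main
    linarith only [main, hZXin, pe, hue]
  have hA : ⟪Z - X, 𝔖.Λ a g'⟫ - ⟪u, g'⟫ = ⟪Z, 𝔖.Λ a g'⟫ - ⟪𝔖.γ Z, g'⟫ := by
    rw [hu, inner_sub_left, inner_sub_left, hXg]; ring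
  rw [hA]
  have hrhs : r^2/2 + ε*ε*(t*t)/2 + r * (2*(t*(s*k))) ≤ t * (3 * k * s * r) := by
    have hrw : r^2/2 + ε*ε*(t*t)/2 + r * (2*(t*(s*k))) =
        t*t*(s*s)*(1/2 + (s*s)/2 + 2*k) := by
      rw [hrts, ← hssq]; ring
    have hrw2 : t * (3*k*s*r) = t*t*(s*s)*(3*k) := by rw [hrts]; ring
    rw [hrw, hrw2]
    have hbase : (0:ℝ) ≤ t*t*(s*s) := by positivity
    have hss1 : s * s ≤ 1 := ss_le_one hspos.le hs1
    have hco : 1/2 + (s*s)/2 + 2*k ≤ 3*k := by linarith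
    exact mul_le_mul_of_nonneg_left hco hbase
  have hfin : t * (⟪Z, 𝔖.Λ a g'⟫ - ⟪𝔖.γ Z, g'⟫) ≤ t * (3 * k * s * r) := by
    rw [mul_sub]
    linarith only [step, hrhs]
  exact le_of_mul_le_mul_left hfin htpos

lemma eps_le_sqrt {ε : ℝ} (h0 : 0 ≤ ε) (h1 : ε ≤ 1) : ε ≤ Real.sqrt ε := by
  nlinarith [Real.sqrt_nonneg ε, Real.mul_self_sqrt h0, Real.sqrt_le_one.mpr h1]

set_option maxHeartbeats 1000000 in
theorem key_lemma (φ : 𝒳 → EReal)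
    (hφ : ∀ (s : S) (x : 𝒳), φ (𝔖.act s x) = φ x) (X : H) {a : A}
    (ha : 𝔖.Λ a (𝔖.γ X) = X) {g : 𝒳}
    (hg : EHasGradientAt φ g (𝔖.γ X)) :
    EHasGradientAt (fun Z => φ (𝔖.γ Z)) (𝔖.Λ a g) X := by
  obtain ⟨rp, hrp⟩ := hg.1
  refine ⟨⟨rp, hrp⟩, ?_⟩
  intro ε₀ hε₀
  have hk1 : (1:ℝ) ≤ ‖g‖ + 1 := by linarith [norm_nonneg g]
  have hkpos : (0:ℝ) < ‖g‖ + 1 := by positivity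
  set ε : ℝ := min 1 ((ε₀ / (8 * (‖g‖ + 1)))^2) with hεdef
  have hεpos : 0 < ε := lt_min one_pos (by positivity)
  have hε1 : ε ≤ 1 := min_le_left _ _
  have hsqle : Real.sqrt ε ≤ ε₀ / (8 * (‖g‖ + 1)) := by
    have h1 : ε ≤ (ε₀ / (8 * (‖g‖ + 1)))^2 := min_le_right _ _
    calc Real.sqrt ε ≤ Real.sqrt ((ε₀ / (8 * (‖g‖ + 1)))^2) := Real.sqrt_le_sqrt h1
      _ = ε₀ / (8 * (‖g‖ + 1)) := Real.sqrt_sq (by positivity)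
  obtain ⟨δ, hδpos, Hδ⟩ := hg.2 ε hεpos
  have tauLip : ∀ w : 𝒳, ‖𝔖.τ w - 𝔖.γ X‖ ≤ ‖w - 𝔖.γ X‖ := by
    intro w
    have h1 : 𝔖.τ (𝔖.γ X) = 𝔖.γ X := tau_gamma 𝔖 X
    calc ‖𝔖.τ w - 𝔖.γ X‖ = ‖𝔖.τ w - 𝔖.τ (𝔖.γ X)‖ := by rw [h1]
      _ ≤ ‖w - 𝔖.γ X‖ := tau_lip 𝔖 a w (𝔖.γ X)
  have hUbase : ∀ w : 𝒳, ‖w - 𝔖.γ X‖ < δ →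
      |⟪𝔖.τ w - w, g⟫| ≤ 2 * ε * ‖w - 𝔖.γ X‖ := by
    intro w hw
    obtain ⟨rw1, rx1, e1, e2, e3⟩ := Hδ w hw
    obtain ⟨rw2, rx2, f1, f2, f3⟩ := Hδ (𝔖.τ w) (lt_of_le_of_lt (tauLip w) hw)
    have hval : φ (𝔖.τ w) = φ w := phi_tau 𝔖 φ hφ w
    have hr12 : rw2 = rw1 := by
      have h := f1.symm.trans (hval.trans e1); exact_mod_cast h
    have hrx : rx2 = rx1 := by
      have h := f2.symm.trans e2; exact_mod_cast h
    rw [hr12, hrx] at f3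
    have hmul : ε * ‖𝔖.τ w - 𝔖.γ X‖ ≤ ε * ‖w - 𝔖.γ X‖ :=
      mul_le_mul_of_nonneg_left (tauLip w) hεpos.le
    have hsplit : ⟪𝔖.τ w - w, g⟫ =
        (rw1 - rx1 - ⟪w - 𝔖.γ X, g⟫) - (rw1 - rx1 - ⟪𝔖.τ w - 𝔖.γ X, g⟫) := by
      rw [inner_sub_left, inner_sub_left, inner_sub_left]; ring
    rw [hsplit]
    calc |(rw1 - rx1 - ⟪w - 𝔖.γ X, g⟫) - (rw1 - rx1 - ⟪𝔖.τ w - 𝔖.γ X, g⟫)|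
        ≤ |rw1 - rx1 - ⟪w - 𝔖.γ X, g⟫| + |rw1 - rx1 - ⟪𝔖.τ w - 𝔖.γ X, g⟫| :=
          abs_sub _ _
      _ ≤ ε * ‖w - 𝔖.γ X‖ + ε * ‖𝔖.τ w - 𝔖.γ X‖ := add_le_add e3 f3
      _ ≤ 2 * ε * ‖w - 𝔖.γ X‖ := by linarith
  have hL3base : ∀ q : 𝒳, (∃ s' : S, q = 𝔖.act s' (𝔖.γ X)) → ‖q - 𝔖.γ X‖ < δ →
      |⟪q - 𝔖.γ X, g⟫| ≤ ε * ‖q - 𝔖.γ X‖ := by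
    rintro q ⟨s', hq⟩ hqδ
    obtain ⟨rq, rx, e1, e2, e3⟩ := Hδ q hqδ
    have hval : φ q = φ (𝔖.γ X) := by rw [hq, hφ]
    have hrr : rq = rx := by
      have h := e1.symm.trans (hval.trans e2); exact_mod_cast h
    rw [hrr, sub_self, zero_sub, abs_neg] at e3
    exact e3
  have hUneg : ∀ w : 𝒳, ‖w - 𝔖.γ X‖ < δ →
      |⟪𝔖.τ w - w, -g⟫| ≤ 2 * ε * ‖w - 𝔖.γ X‖ := by
    intro w hw
    rw [inner_neg_right, abs_neg]
    exact hUbase w hw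
  have hL3neg : ∀ q : 𝒳, (∃ s' : S, q = 𝔖.act s' (𝔖.γ X)) → ‖q - 𝔖.γ X‖ < δ →
      |⟪q - 𝔖.γ X, -g⟫| ≤ ε * ‖q - 𝔖.γ X‖ := by
    intro q hq hqδ
    rw [inner_neg_right, abs_neg]
    exact hL3base q hq hqδ
  refine ⟨min δ (Real.sqrt ε * δ / (2 * (‖g‖ + 1))), by positivity, ?_⟩
  intro Z hZ
  by_cases hZX : Z = X
  · refine ⟨rp, rp, ?_, hrp, ?_⟩
    · show φ (𝔖.γ Z) = (rp : EReal)
      rw [hZX]; exact hrp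
    · rw [hZX]
      simp
  · have hZδ : ‖Z - X‖ < δ := lt_of_lt_of_le hZ (min_le_left _ _)
    have hZ2 : ‖Z - X‖ < Real.sqrt ε * δ / (2 * (‖g‖ + 1)) :=
      lt_of_lt_of_le hZ (min_le_right _ _)
    have hγ : ‖𝔖.γ Z - 𝔖.γ X‖ < δ := lt_of_le_of_lt (gamma_lip 𝔖 Z X) hZδ
    obtain ⟨rz, rx, e1, e2, e3⟩ := Hδ (𝔖.γ Z) hγ
    refine ⟨rz, rx, e1, e2, ?_⟩
    have hone1 := oneside 𝔖 ha hεpos hε1 hδpos hUbase hL3base hZX hZ2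
    have hone2 := oneside 𝔖 ha hεpos hε1 hδpos hUneg hL3neg hZX
      (by rw [norm_neg]; exact hZ2)
    rw [map_neg, inner_neg_right, inner_neg_right, norm_neg] at hone2
    have hDabs : |⟪𝔖.γ Z - 𝔖.γ X, g⟫ - ⟪Z - X, 𝔖.Λ a g⟫| ≤
        3 * (‖g‖ + 1) * Real.sqrt ε * ‖Z - X‖ :=
      abs_le.mpr ⟨by linarith, by linarith⟩
    have habs : |rz - rx - ⟪Z - X, 𝔖.Λ a g⟫| ≤
        |rz - rx - ⟪𝔖.γ Z - 𝔖.γ X, g⟫| +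
        |⟪𝔖.γ Z - 𝔖.γ X, g⟫ - ⟪Z - X, 𝔖.Λ a g⟫| := by
      have hre : rz - rx - ⟪Z - X, 𝔖.Λ a g⟫ =
          (rz - rx - ⟪𝔖.γ Z - 𝔖.γ X, g⟫) +
          (⟪𝔖.γ Z - 𝔖.γ X, g⟫ - ⟪Z - X, 𝔖.Λ a g⟫) := by ring
      rw [hre]; exact abs_add_le _ _
    have hq2 : ε * ‖𝔖.γ Z - 𝔖.γ X‖ ≤ Real.sqrt ε * ‖Z - X‖ :=
      mul_le_mul (eps_le_sqrt hεpos.le hε1) (gamma_lip 𝔖 Z X) (norm_nonneg _)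
        (Real.sqrt_nonneg ε)
    have hbase : (0:ℝ) ≤ Real.sqrt ε * ‖Z - X‖ := by positivity
    have hq3 : Real.sqrt ε * ‖Z - X‖ + 3 * (‖g‖ + 1) * Real.sqrt ε * ‖Z - X‖ ≤
        4 * (‖g‖ + 1) * (Real.sqrt ε * ‖Z - X‖) := by
      have h5 := mul_nonneg (sub_nonneg.mpr hk1) hbase
      nlinarith
    have hq4 : 4 * (‖g‖ + 1) * (Real.sqrt ε * ‖Z - X‖) ≤
        4 * (‖g‖ + 1) * ((ε₀ / (8 * (‖g‖ + 1))) * ‖Z - X‖) :=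
      mul_le_mul_of_nonneg_left
        (mul_le_mul_of_nonneg_right hsqle (norm_nonneg _)) (by positivity)
    have hq5 : 4 * (‖g‖ + 1) * ((ε₀ / (8 * (‖g‖ + 1))) * ‖Z - X‖) =
        (ε₀ / 2) * ‖Z - X‖ := by
      field_simp
      ring
    have hfinal : (ε₀ / 2) * ‖Z - X‖ ≤ ε₀ * ‖Z - X‖ := by
      have h6 := mul_nonneg hε₀.le (norm_nonneg (Z - X))
      linarith
    calc |rz - rx - ⟪Z - X, 𝔖.Λ a g⟫|
        ≤ |rz - rx - ⟪𝔖.γ Z - 𝔖.γ X, g⟫| +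
          |⟪𝔖.γ Z - 𝔖.γ X, g⟫ - ⟪Z - X, 𝔖.Λ a g⟫| := habs
      _ ≤ ε * ‖𝔖.γ Z - 𝔖.γ X‖ + 3 * (‖g‖ + 1) * Real.sqrt ε * ‖Z - X‖ :=
          add_le_add e3 hDabs
      _ ≤ Real.sqrt ε * ‖Z - X‖ + 3 * (‖g‖ + 1) * Real.sqrt ε * ‖Z - X‖ := by
          linarith
      _ ≤ 4 * (‖g‖ + 1) * (Real.sqrt ε * ‖Z - X‖) := hq3
      _ ≤ 4 * (‖g‖ + 1) * ((ε₀ / (8 * (‖g‖ + 1))) * ‖Z - X‖) := hq4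
      _ = (ε₀ / 2) * ‖Z - X‖ := hq5
      _ ≤ ε₀ * ‖Z - X‖ := hfinal

theorem transfer [FiniteDimensional ℝ 𝒳] [FiniteDimensional ℝ H]
    (φ : 𝒳 → EReal)
    (hφ : ∀ (s : S) (x : 𝒳), φ (𝔖.act s x) = φ x) (X : H) {a : A}
    (ha : 𝔖.Λ a (𝔖.γ X) = X) {G : H}
    (hG : EHasGradientAt (fun Z => φ (𝔖.γ Z)) G X) :
    EHasGradientAt φ (((𝔖.Λ a).toContinuousLinearMap).adjoint G) (𝔖.γ X) := by
  obtain ⟨rX, hrX⟩ := hG.1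
  refine ⟨⟨rX, hrX⟩, ?_⟩
  intro ε hε
  obtain ⟨δ, hδ, Hδ⟩ := hG.2 ε hε
  refine ⟨δ, hδ, ?_⟩
  intro z hz
  have hnorm : ‖𝔖.Λ a z - X‖ = ‖z - 𝔖.γ X‖ := by
    conv_lhs => rw [← ha]
    rw [← map_sub, (𝔖.Λ a).norm_map]
  obtain ⟨rz, rx, h1, h2, h3⟩ := Hδ (𝔖.Λ a z) (by rwa [hnorm])
  refine ⟨rz, rx, ?_, h2, ?_⟩
  · rw [← phi_tau 𝔖 φ hφ z, ← 𝔖.γΛ a z]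
    exact h1
  · have hadj : ⟪𝔖.Λ a z - X, G⟫ =
        ⟪z - 𝔖.γ X, ((𝔖.Λ a).toContinuousLinearMap).adjoint G⟫ := by
      conv_lhs => rw [← ha, ← map_sub]
      exact (ContinuousLinearMap.adjoint_inner_right
        ((𝔖.Λ a).toContinuousLinearMap) (z - 𝔖.γ X) G).symm
    rw [hadj, hnorm] at h3
    exact h3

end SDSAux

/-- For an `S`-invariant `φ : 𝒳 → [-∞, +∞]` and `X ∈ H` with `φ(γ(X)) ∈ ℝ`:
`φ ∘ γ` is Fréchet differentiable at `X` iff `φ` is Fréchet differentiable at `γ(X)`,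
in which case `∇(φ ∘ γ)(X) = Λ_a (∇φ(γ(X)))` for every `a ∈ A_X`. -/
theorem frechet_diff_spectral_iff
    [FiniteDimensional ℝ 𝒳] [FiniteDimensional ℝ H]
    (𝔖 : SDS 𝒳 H S A) (hcl : IsClosed 𝔖.LambdaSet)
    (φ : 𝒳 → EReal) (hφ : ∀ (s : S) (x : 𝒳), φ (𝔖.act s x) = φ x)
    (X : H) (hX : ∃ r : ℝ, φ (𝔖.γ X) = (r : EReal)) :
    (EFDiffAt (fun Z => φ (𝔖.γ Z)) X ↔ EFDiffAt φ (𝔖.γ X)) ∧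
    (∀ a ∈ 𝔖.AX X, ∀ g : 𝒳, EHasGradientAt φ g (𝔖.γ X) →
      EHasGradientAt (fun Z => φ (𝔖.γ Z)) (𝔖.Λ a g) X) := by
  constructor
  · constructor
    · rintro ⟨G, hG, -⟩
      obtain ⟨a, haX⟩ := 𝔖.decomp X
      have ha : 𝔖.Λ a (𝔖.γ X) = X := haX.symm
      exact ⟨_, SDSAux.transfer 𝔖 φ hφ X ha hG,
        fun g' hg' => SDSAux.EHasGradientAt_unique hg'
          (SDSAux.transfer 𝔖 φ hφ X ha hG)⟩
    · rintro ⟨g, hg, -⟩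
      obtain ⟨a, haX⟩ := 𝔖.decomp X
      have ha : 𝔖.Λ a (𝔖.γ X) = X := haX.symm
      exact ⟨_, SDSAux.key_lemma 𝔖 φ hφ X ha hg,
        fun G' hG' => SDSAux.EHasGradientAt_unique hG'
          (SDSAux.key_lemma 𝔖 φ hφ X ha hg)⟩
  · intro a haAX g hg
    have ha : 𝔖.Λ a (𝔖.γ X) = X := (show X = 𝔖.Λ a (𝔖.γ X) from haAX).symm
    exact SDSAux.key_lemma 𝔖 φ hφ X ha hg
end
end

section
/- Suppose (𝒳, S, γ, (Λ_a)_{a∈A}) is a spectral decomposition system for a Euclidean space 𝔥 with {Λ_a : a ∈ A} closed in L(𝒳,𝔥), and suppose in addition that the group S is finite. Then for all X, Y ∈ 𝔥, the vector γ(X+Y) − γ(X) belongs to the convex hull of the orbit S·γ(Y) = {s·γ(Y) : s ∈ S}. -/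
open Filter Topology Set Metric
open scoped RealInnerProductSpace

noncomputable section

variable {𝒳 H S A : Type*} [NormedAddCommGroup 𝒳] [InnerProductSpace ℝ 𝒳]
    [NormedAddCommGroup H] [InnerProductSpace ℝ H] [Group S]

namespace SDS

variable (𝔖 : SDS 𝒳 H S A)

lemma nonemptyA (𝔖 : SDS 𝒳 H S A) : Nonempty A := ⟨(𝔖.decomp 0).choose⟩

lemma tau_gamma (X : H) : 𝔖.τ (𝔖.γ X) = 𝔖.γ X := by
  obtain ⟨a, ha⟩ := 𝔖.decomp X
  calc 𝔖.τ (𝔖.γ X) = 𝔖.γ (𝔖.Λ a (𝔖.γ X)) := (𝔖.γΛ a _).symm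
    _ = 𝔖.γ X := by rw [← ha]

lemma tau_idem (x : 𝒳) : 𝔖.τ (𝔖.τ x) = 𝔖.τ x := by
  obtain ⟨s, hs⟩ := 𝔖.τ_orbit x
  calc 𝔖.τ (𝔖.τ x) = 𝔖.τ (𝔖.act s x) := by rw [hs]
    _ = 𝔖.τ x := 𝔖.τ_inv s x

lemma inner_lambda_le (a b : A) (x y : 𝒳) :
    ⟪𝔖.Λ a x, 𝔖.Λ b y⟫ ≤ ⟪𝔖.τ x, 𝔖.τ y⟫ := by
  have := 𝔖.inner_le (𝔖.Λ a x) (𝔖.Λ b y)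
  rwa [𝔖.γΛ, 𝔖.γΛ] at this

lemma inner_le_gamma_tau (X : H) (a : A) (x : 𝒳) :
    ⟪X, 𝔖.Λ a x⟫ ≤ ⟪𝔖.γ X, 𝔖.τ x⟫ := by
  have := 𝔖.inner_le X (𝔖.Λ a x)
  rwa [𝔖.γΛ] at this

lemma norm_gamma_s16 (X : H) : ‖𝔖.γ X‖ = ‖X‖ := by
  obtain ⟨a, ha⟩ := 𝔖.decomp X
  conv_rhs => rw [ha]
  rw [(𝔖.Λ a).norm_map]

lemma gamma_lipschitz : LipschitzWith 1 𝔖.γ := by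
  apply LipschitzWith.of_dist_le_mul
  intro X Y
  rw [dist_eq_norm, dist_eq_norm]
  simp only [NNReal.coe_one, one_mul]
  have h1 : ‖𝔖.γ X - 𝔖.γ Y‖ ^ 2 ≤ ‖X - Y‖ ^ 2 := by
    rw [norm_sub_sq_real, norm_sub_sq_real, 𝔖.norm_gamma_s16, 𝔖.norm_gamma_s16]
    have := 𝔖.inner_le X Y
    linarith
  nlinarith [norm_nonneg (𝔖.γ X - 𝔖.γ Y), norm_nonneg (X - Y)]

lemma span_tau [Finite S] [FiniteDimensional ℝ 𝒳] :
    Submodule.span ℝ (Set.range 𝔖.τ) = ⊤ := by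
  set p := Submodule.span ℝ (Set.range 𝔖.τ) with hp
  have hcover : (⋃ s : S,
      ((p.map ((𝔖.act s).toLinearEquiv : 𝒳 →ₗ[ℝ] 𝒳) : Submodule ℝ 𝒳) : Set 𝒳)) = Set.univ := by
    ext x
    simp only [Set.mem_iUnion, Set.mem_univ, iff_true]
    obtain ⟨s, hs⟩ := 𝔖.τ_orbit x
    refine ⟨s⁻¹, ?_⟩
    have hx : x = 𝔖.act s⁻¹ (𝔖.τ x) := by
      rw [hs]
      have h2 : (𝔖.act s⁻¹) ((𝔖.act s) x) = (𝔖.act s⁻¹ * 𝔖.act s) x := rfl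
      rw [h2, ← map_mul, inv_mul_cancel, map_one]
      rfl
    rw [hx]
    exact Submodule.mem_map_of_mem (Submodule.subset_span (Set.mem_range_self x))
  obtain ⟨s, hs⟩ := nonempty_interior_of_iUnion_of_closed
    (fun s : S => Submodule.closed_of_finiteDimensional _) hcover
  have htop : p.map ((𝔖.act s).toLinearEquiv : 𝒳 →ₗ[ℝ] 𝒳) = ⊤ :=
    Submodule.eq_top_of_nonempty_interior' _ hs
  rw [Submodule.eq_top_iff']
  intro x
  have : (𝔖.act s) x ∈ p.map ((𝔖.act s).toLinearEquiv : 𝒳 →ₗ[ℝ] 𝒳) := htop ▸ Submodule.mem_top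
  obtain ⟨y, hy, hyx⟩ := this
  have : y = x := (𝔖.act s).injective hyx
  rwa [← this]

lemma lambdaSet_compact [FiniteDimensional ℝ 𝒳] [FiniteDimensional ℝ H]
    (hcl : IsClosed 𝔖.LambdaSet) : IsCompact 𝔖.LambdaSet := by
  have hsub : 𝔖.LambdaSet ⊆ Metric.closedBall 0 1 := by
    rintro L ⟨a, rfl⟩
    simpa [Metric.mem_closedBall, dist_zero_right] using (𝔖.Λ a).norm_toContinuousLinearMap_le
  exact (isCompact_closedBall (0 : 𝒳 →L[ℝ] H) 1).of_isClosed_subset hcl hsub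

lemma key [Finite S] [FiniteDimensional ℝ 𝒳] [FiniteDimensional ℝ H]
    (hcl : IsClosed 𝔖.LambdaSet) (Z Y : H) (w : 𝒳) {ε : ℝ} (hε : 0 < ε) :
    ∃ δ > 0, ∀ h : ℝ, 0 < h → h < δ →
      ⟪𝔖.γ (Z + h • Y) - 𝔖.γ Z, w⟫ ≤ h * (⟪𝔖.γ Y, 𝔖.τ w⟫ + ε) := by
  set c := ⟪𝔖.γ Y, 𝔖.τ w⟫ with hc
  by_contra hcon
  push_neg at hcon
  set Bad : Set ℝ := {h : ℝ | h * (c + ε) < ⟪𝔖.γ (Z + h • Y) - 𝔖.γ Z, w⟫} with hBadDef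
  have hNB : (𝓝[>] (0:ℝ) ⊓ 𝓟 Bad).NeBot := by
    rw [Filter.inf_principal_neBot_iff]
    intro U hU
    obtain ⟨δ, hδmem, hδ⟩ := mem_nhdsGT_iff_exists_Ioo_subset.mp hU
    obtain ⟨h, h0, hδ', hbad⟩ := hcon δ hδmem
    exact ⟨h, hδ ⟨h0, hδ'⟩, hbad⟩
  set l := 𝓝[>] (0:ℝ) ⊓ 𝓟 Bad with hl
  haveI := hNB
  set F := Ultrafilter.of l with hFdef
  have hFl : (F : Filter ℝ) ≤ l := Ultrafilter.of_le l
  have h1 : (F : Filter ℝ) ≤ 𝓝[>] (0:ℝ) := hFl.trans inf_le_left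
  have h2 : (F : Filter ℝ) ≤ 𝓟 Bad := hFl.trans inf_le_right
  have hFpos : ∀ᶠ h in (F : Filter ℝ), (0:ℝ) < h := h1 self_mem_nhdsWithin
  have hFbad : ∀ᶠ h in (F : Filter ℝ), h ∈ Bad := h2 (Filter.mem_principal_self Bad)
  have hFnhds : Tendsto (fun h : ℝ => h) (F : Filter ℝ) (𝓝 0) :=
    tendsto_id.mono_left (h1.trans nhdsWithin_le_nhds)
  have hline : Tendsto (fun h : ℝ => Z + h • Y) (F : Filter ℝ) (𝓝 Z) := by
    have hl2 : Tendsto (fun h : ℝ => Z + h • Y) (F : Filter ℝ) (𝓝 (Z + (0:ℝ) • Y)) :=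
      Filter.Tendsto.add tendsto_const_nhds (Filter.Tendsto.smul hFnhds tendsto_const_nhds)
    simpa using hl2
  have hdec : ∀ h : ℝ, Z + h • Y = 𝔖.Λ ((𝔖.decomp (Z + h • Y)).choose) (𝔖.γ (Z + h • Y)) :=
    fun h => (𝔖.decomp (Z + h • Y)).choose_spec
  set a : ℝ → A := fun h => (𝔖.decomp (Z + h • Y)).choose with haDef
  set Tn : ℝ → (𝒳 →L[ℝ] H) := fun h => (𝔖.Λ (a h)).toContinuousLinearMap with hTnDef
  obtain ⟨T, hTmem, hTle⟩ := isCompact_iff_ultrafilter_le_nhds.mp (𝔖.lambdaSet_compact hcl)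
      (F.map Tn) (by
        rw [Ultrafilter.coe_map, Filter.le_principal_iff, Filter.mem_map]
        exact Filter.univ_mem' (fun h => ⟨a h, rfl⟩))
  rw [Ultrafilter.coe_map] at hTle
  have hTlim : Tendsto Tn (F : Filter ℝ) (𝓝 T) := hTle
  obtain ⟨b, hb⟩ := hTmem
  have hγcont : Tendsto (fun h : ℝ => 𝔖.γ (Z + h • Y)) (F : Filter ℝ) (𝓝 (𝔖.γ Z)) :=
    (𝔖.gamma_lipschitz.continuous.tendsto _).comp hline
  have happly : ∀ (g : ℝ → 𝒳) (v : 𝒳), Tendsto g (F : Filter ℝ) (𝓝 v) →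
      Tendsto (fun h => Tn h (g h)) (F : Filter ℝ) (𝓝 (T v)) := fun g v hg =>
    (isBoundedBilinearMap_apply.continuous.tendsto (T, v)).comp (hTlim.prodMk_nhds hg)
  have hbZ : 𝔖.Λ b (𝔖.γ Z) = Z := by
    have h4 : Tendsto (fun h => Tn h (𝔖.γ (Z + h • Y))) (F : Filter ℝ) (𝓝 (T (𝔖.γ Z))) :=
      happly _ _ hγcont
    have h5 : (fun h : ℝ => Tn h (𝔖.γ (Z + h • Y))) = fun h : ℝ => Z + h • Y := by
      funext h
      show 𝔖.Λ (a h) (𝔖.γ (Z + h • Y)) = Z + h • Y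
      exact (hdec h).symm
    rw [h5] at h4
    have h6 := tendsto_nhds_unique h4 hline
    rw [hb] at h6
    exact h6
  set d : ℝ → 𝒳 := fun h => h⁻¹ • (𝔖.γ (Z + h • Y) - 𝔖.γ Z) with hdDef
  have hdball : ∀ᶠ h in (F : Filter ℝ), d h ∈ Metric.closedBall (0:𝒳) ‖Y‖ := by
    filter_upwards [hFpos] with h h0
    have hlip : ‖𝔖.γ (Z + h • Y) - 𝔖.γ Z‖ ≤ h * ‖Y‖ := by
      have h7 := 𝔖.gamma_lipschitz.dist_le_mul (Z + h • Y) Z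
      rw [dist_eq_norm, dist_eq_norm, add_sub_cancel_left, norm_smul] at h7
      simpa [abs_of_pos h0] using h7
    rw [Metric.mem_closedBall, dist_zero_right]
    show ‖h⁻¹ • (𝔖.γ (Z + h • Y) - 𝔖.γ Z)‖ ≤ ‖Y‖
    rw [norm_smul, Real.norm_eq_abs, abs_of_pos (inv_pos.mpr h0)]
    calc h⁻¹ * ‖𝔖.γ (Z + h • Y) - 𝔖.γ Z‖ ≤ h⁻¹ * (h * ‖Y‖) :=
          mul_le_mul_of_nonneg_left hlip (inv_pos.mpr h0).le
      _ = ‖Y‖ := by field_simp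
  obtain ⟨dl, hdlmem, hdlle⟩ := isCompact_iff_ultrafilter_le_nhds.mp
      (isCompact_closedBall (0:𝒳) ‖Y‖) (F.map d)
      (by rw [Ultrafilter.coe_map, Filter.le_principal_iff, Filter.mem_map]; exact hdball)
  rw [Ultrafilter.coe_map] at hdlle
  have hdlim : Tendsto d (F : Filter ℝ) (𝓝 dl) := hdlle
  have hinner_d : ∀ h : ℝ, ∀ v : 𝒳,
      ⟪d h, v⟫ = h⁻¹ * (⟪𝔖.γ (Z + h • Y), v⟫ - ⟪𝔖.γ Z, v⟫) := by
    intro h v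
    show ⟪h⁻¹ • (𝔖.γ (Z + h • Y) - 𝔖.γ Z), v⟫ = _
    rw [real_inner_smul_left, inner_sub_left]
  have hbase : ∀ x : 𝒳, ⟪dl, 𝔖.τ x⟫ = ⟪Y, 𝔖.Λ b (𝔖.τ x)⟫ := by
    intro x
    set v := 𝔖.τ x with hv
    have hvfix : 𝔖.τ v = v := 𝔖.tau_idem x
    have hupper : ∀ᶠ h in (F : Filter ℝ), ⟪d h, v⟫ ≤ ⟪Y, Tn h v⟫ := by
      filter_upwards [hFpos] with h h0
      have e1 : ⟪𝔖.γ (Z + h • Y), v⟫ = ⟪Z, 𝔖.Λ (a h) v⟫ + h * ⟪Y, 𝔖.Λ (a h) v⟫ := by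
        calc ⟪𝔖.γ (Z + h • Y), v⟫ = ⟪𝔖.Λ (a h) (𝔖.γ (Z + h • Y)), 𝔖.Λ (a h) v⟫ :=
              ((𝔖.Λ (a h)).inner_map_map _ _).symm
          _ = ⟪Z + h • Y, 𝔖.Λ (a h) v⟫ := by rw [← hdec h]
          _ = ⟪Z, 𝔖.Λ (a h) v⟫ + h * ⟪Y, 𝔖.Λ (a h) v⟫ := by
              rw [inner_add_left, real_inner_smul_left]
      have e2 : ⟪Z, 𝔖.Λ (a h) v⟫ ≤ ⟪𝔖.γ Z, v⟫ := by
        have h8 := 𝔖.inner_lambda_le b (a h) (𝔖.γ Z) v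
        rw [hbZ, 𝔖.tau_gamma, hvfix] at h8
        exact h8
      have hTnv : Tn h v = 𝔖.Λ (a h) v := rfl
      rw [hinner_d, e1, hTnv]
      have e9 : ⟪Z, 𝔖.Λ (a h) v⟫ + h * ⟪Y, 𝔖.Λ (a h) v⟫ - ⟪𝔖.γ Z, v⟫
          ≤ h * ⟪Y, 𝔖.Λ (a h) v⟫ := by linarith
      calc h⁻¹ * (⟪Z, 𝔖.Λ (a h) v⟫ + h * ⟪Y, 𝔖.Λ (a h) v⟫ - ⟪𝔖.γ Z, v⟫)
          ≤ h⁻¹ * (h * ⟪Y, 𝔖.Λ (a h) v⟫) :=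
            mul_le_mul_of_nonneg_left e9 (inv_pos.mpr h0).le
        _ = ⟪Y, 𝔖.Λ (a h) v⟫ := by field_simp
    have hlower : ∀ᶠ h in (F : Filter ℝ), ⟪Y, 𝔖.Λ b v⟫ ≤ ⟪d h, v⟫ := by
      filter_upwards [hFpos] with h h0
      have e4 : ⟪Z + h • Y, 𝔖.Λ b v⟫ ≤ ⟪𝔖.γ (Z + h • Y), v⟫ := by
        have h9 := 𝔖.inner_le_gamma_tau (Z + h • Y) b v
        rwa [hvfix] at h9
      have e5 : ⟪Z, 𝔖.Λ b v⟫ = ⟪𝔖.γ Z, v⟫ := by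
        have h10 := (𝔖.Λ b).inner_map_map (𝔖.γ Z) v
        rw [hbZ] at h10
        exact h10
      rw [inner_add_left, real_inner_smul_left, e5] at e4
      rw [hinner_d]
      have e10 : h * ⟪Y, 𝔖.Λ b v⟫ ≤ ⟪𝔖.γ (Z + h • Y), v⟫ - ⟪𝔖.γ Z, v⟫ := by linarith
      calc ⟪Y, 𝔖.Λ b v⟫ = h⁻¹ * (h * ⟪Y, 𝔖.Λ b v⟫) := by field_simp
        _ ≤ h⁻¹ * (⟪𝔖.γ (Z + h • Y), v⟫ - ⟪𝔖.γ Z, v⟫) :=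
            mul_le_mul_of_nonneg_left e10 (inv_pos.mpr h0).le
    have hdv : Tendsto (fun h => ⟪d h, v⟫) (F : Filter ℝ) (𝓝 ⟪dl, v⟫) :=
      hdlim.inner tendsto_const_nhds
    have hupperlim : Tendsto (fun h => ⟪Y, Tn h v⟫) (F : Filter ℝ) (𝓝 ⟪Y, T v⟫) :=
      tendsto_const_nhds.inner (happly (fun _ => v) v tendsto_const_nhds)
    have hle1 : ⟪dl, v⟫ ≤ ⟪Y, T v⟫ := le_of_tendsto_of_tendsto hdv hupperlim hupper
    have hle2 : ⟪Y, 𝔖.Λ b v⟫ ≤ ⟪dl, v⟫ :=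
      le_of_tendsto_of_tendsto tendsto_const_nhds hdv hlower
    have hTv : T v = 𝔖.Λ b v := by rw [hb]; rfl
    rw [hTv] at hle1
    exact le_antisymm hle1 hle2
  have hdl_eq : dl = (ContinuousLinearMap.adjoint ((𝔖.Λ b).toContinuousLinearMap)) Y := by
    set adj := (ContinuousLinearMap.adjoint ((𝔖.Λ b).toContinuousLinearMap)) Y with hadj
    have horth : ∀ v : 𝒳, v ∈ Set.range 𝔖.τ → ⟪dl - adj, v⟫ = 0 := by
      rintro v ⟨x, rfl⟩
      rw [inner_sub_left, hadj, ContinuousLinearMap.adjoint_inner_left]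
      have : ((𝔖.Λ b).toContinuousLinearMap) (𝔖.τ x) = 𝔖.Λ b (𝔖.τ x) := rfl
      rw [this, hbase x, sub_self]
    have hker : Submodule.span ℝ (Set.range 𝔖.τ) ≤ LinearMap.ker (innerₛₗ ℝ (dl - adj)) := by
      rw [Submodule.span_le]
      intro v hv
      rw [SetLike.mem_coe, LinearMap.mem_ker]
      exact horth v hv
    rw [𝔖.span_tau, top_le_iff] at hker
    have hall : ⟪dl - adj, dl - adj⟫ = 0 := by
      have := LinearMap.mem_ker.mp (hker ▸ Submodule.mem_top :
        dl - adj ∈ LinearMap.ker (innerₛₗ ℝ (dl - adj)))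
      exact this
    have := inner_self_eq_zero.mp hall
    exact sub_eq_zero.mp this
  have hlast : ⟪dl, w⟫ ≤ c := by
    rw [hdl_eq, ContinuousLinearMap.adjoint_inner_left]
    have : ((𝔖.Λ b).toContinuousLinearMap) w = 𝔖.Λ b w := rfl
    rw [this, hc]
    exact 𝔖.inner_le_gamma_tau Y b w
  have hge : c + ε ≤ ⟪dl, w⟫ := by
    have hdw : Tendsto (fun h => ⟪d h, w⟫) (F : Filter ℝ) (𝓝 ⟪dl, w⟫) :=
      hdlim.inner tendsto_const_nhds
    apply le_of_tendsto_of_tendsto tendsto_const_nhds hdw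
    filter_upwards [hFpos, hFbad] with h h0 hbad
    have hbad' : h * (c + ε) < ⟪𝔖.γ (Z + h • Y) - 𝔖.γ Z, w⟫ := hbad
    show c + ε ≤ ⟪d h, w⟫
    rw [hinner_d]
    rw [← inner_sub_left]
    calc c + ε = h⁻¹ * (h * (c + ε)) := by field_simp
      _ ≤ h⁻¹ * ⟪𝔖.γ (Z + h • Y) - 𝔖.γ Z, w⟫ :=
          mul_le_mul_of_nonneg_left hbad'.le (inv_pos.mpr h0).le
  linarith

lemma main_ineq [Finite S] [FiniteDimensional ℝ 𝒳] [FiniteDimensional ℝ H]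
    (hcl : IsClosed 𝔖.LambdaSet) (X Y : H) (w : 𝒳) :
    ⟪𝔖.γ (X + Y) - 𝔖.γ X, w⟫ ≤ ⟪𝔖.γ Y, 𝔖.τ w⟫ := by
  set c := ⟪𝔖.γ Y, 𝔖.τ w⟫ with hc
  set f : ℝ → ℝ := fun t => ⟪𝔖.γ (X + t • Y), w⟫ with hf
  have hfc : ContinuousOn f (Icc 0 1) := by
    apply Continuous.continuousOn
    apply Continuous.inner
    · exact 𝔖.gamma_lipschitz.continuous.comp (by continuity)
    · exact continuous_const
  have hB : ContinuousOn (fun t : ℝ => f 0 + c * t) (Icc 0 1) := by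
    apply Continuous.continuousOn; continuity
  have hB' : ∀ x ∈ Ico (0:ℝ) 1,
      HasDerivWithinAt (fun t : ℝ => f 0 + c * t) c (Ici x) x := by
    intro x _
    simpa using (((hasDerivAt_id x).const_mul c).const_add (f 0)).hasDerivWithinAt (s := Ici x)
  have hbound : ∀ x ∈ Ico (0:ℝ) 1, ∀ r, c < r → ∃ᶠ z in 𝓝[>] x, slope f x z < r := by
    intro x _ r hr
    obtain ⟨δ, hδ0, hδ⟩ := 𝔖.key hcl (X + x • Y) Y w (show 0 < (r - c)/2 by linarith)
    have hev : ∀ᶠ z in 𝓝[>] x, slope f x z < r := by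
      have hmem : Ioo x (x + δ) ∈ 𝓝[>] x := Ioo_mem_nhdsGT (by linarith)
      filter_upwards [hmem] with z hz
      have hzx : 0 < z - x := by linarith [hz.1]
      have hzd : z - x < δ := by linarith [hz.2]
      have hkey := hδ (z - x) hzx hzd
      have harg : X + x • Y + (z - x) • Y = X + z • Y := by
        rw [add_assoc, ← add_smul]
        ring_nf
      rw [harg] at hkey
      rw [slope_def_field, div_lt_iff₀ hzx]
      have hfz : f z - f x = ⟪𝔖.γ (X + z • Y) - 𝔖.γ (X + x • Y), w⟫ := by
        rw [hf, inner_sub_left]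
      rw [hfz]
      calc ⟪𝔖.γ (X + z • Y) - 𝔖.γ (X + x • Y), w⟫ ≤ (z - x) * (c + (r - c)/2) := hkey
        _ < r * (z - x) := by nlinarith
    exact hev.frequently
  have hmain := image_le_of_liminf_slope_right_le_deriv_boundary hfc
    (by simp) hB hB' hbound (right_mem_Icc.mpr zero_le_one)
  have hf1 : f 1 = ⟪𝔖.γ (X + Y), w⟫ := by rw [hf]; simp
  have hf0 : f 0 = ⟪𝔖.γ X, w⟫ := by rw [hf]; simp
  rw [inner_sub_left]
  rw [hf1, hf0, mul_one] at hmain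
  linarith

end SDS

/-- Generalized Lidskiĭ theorem: if moreover the group `S` is finite, then for all
`X, Y ∈ H`, `γ(X + Y) - γ(X)` lies in the convex hull of the orbit `S · γ(Y)`. -/
theorem generalized_lidskii
    [FiniteDimensional ℝ 𝒳] [FiniteDimensional ℝ H] [Finite S]
    (𝔖 : SDS 𝒳 H S A) (hcl : IsClosed 𝔖.LambdaSet)
    (X Y : H) :
    𝔖.γ (X + Y) - 𝔖.γ X ∈ convexHull ℝ {z : 𝒳 | ∃ s : S, z = 𝔖.act s (𝔖.γ Y)} := by
  set K : Set 𝒳 := {z : 𝒳 | ∃ s : S, z = 𝔖.act s (𝔖.γ Y)} with hK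
  have hKfin : K.Finite := by
    have hKr : K = Set.range (fun s : S => 𝔖.act s (𝔖.γ Y)) := by
      ext z
      constructor
      · rintro ⟨s, rfl⟩; exact ⟨s, rfl⟩
      · rintro ⟨s, rfl⟩; exact ⟨s, rfl⟩
    rw [hKr]
    exact Set.finite_range _
  by_contra hnot
  obtain ⟨f, u, hfu, hux⟩ := geometric_hahn_banach_closed_point
    (convex_convexHull ℝ K) (hKfin.isCompact_convexHull (𝕜 := ℝ)).isClosed hnot
  set w := (InnerProductSpace.toDual ℝ 𝒳).symm f with hw
  have hfw : ∀ z : 𝒳, f z = ⟪w, z⟫ := by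
    intro z
    have h1 : (InnerProductSpace.toDual ℝ 𝒳) w = f :=
      (InnerProductSpace.toDual ℝ 𝒳).apply_symm_apply f
    rw [← h1, InnerProductSpace.toDual_apply_apply]
  have hmain := 𝔖.main_ineq hcl X Y w
  obtain ⟨σ, hσ⟩ := 𝔖.τ_orbit w
  have horb : ⟪𝔖.γ Y, 𝔖.τ w⟫ = ⟪𝔖.act σ⁻¹ (𝔖.γ Y), w⟫ := by
    rw [hσ]
    have h2 : 𝔖.act σ (𝔖.act σ⁻¹ (𝔖.γ Y)) = 𝔖.γ Y := by
      have h3 : (𝔖.act σ) ((𝔖.act σ⁻¹) (𝔖.γ Y)) = ((𝔖.act σ) * (𝔖.act σ⁻¹)) (𝔖.γ Y) := rfl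
      rw [h3, ← map_mul, mul_inv_cancel, map_one]
      rfl
    have h1 := (𝔖.act σ).inner_map_map (𝔖.act σ⁻¹ (𝔖.γ Y)) w
    rw [h2] at h1
    exact h1
  have hmem : 𝔖.act σ⁻¹ (𝔖.γ Y) ∈ convexHull ℝ K :=
    subset_convexHull ℝ K ⟨σ⁻¹, rfl⟩
  have hlt := hfu _ hmem
  rw [hfw] at hlt
  rw [hfw] at hux
  rw [real_inner_comm] at hlt
  rw [real_inner_comm] at hux
  rw [horb] at hmain
  linarith
end
end
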